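/- arXiv:1510.02808 — 4 statements merged into one kernel-verified Lean document; each statement's English description precedes it below -/
import Mathlib

section
/- The family FG of all functionally generated portfolio maps π: Δ_n → Δ̄_n, equipped with the supremum metric, is not separable; in particular FG is not totally bounded. (For n = 2, the uncountable family π_θ, θ ∈ (0,1), defined by π_θ(p) = (1,0) if p_1 ≤ θ and π_θ(p) = (0,1) if p_1 > θ, consists of functionally generated portfolios and forms an uncountable set whose points are at uniformly positive pairwise supremum distance.) -/
open MeasureTheory Filter Topology Finset
open scoped UniformConvergence

noncomputable section

/-- The open unit simplex in `ℝⁿ`. -/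
def oS (n : ℕ) : Set (Fin n → ℝ) := {p | (∀ i, 0 < p i) ∧ ∑ i, p i = 1}

/-- The closed unit simplex in `ℝⁿ`. -/
def cS (n : ℕ) : Set (Fin n → ℝ) := {p | (∀ i, 0 ≤ p i) ∧ ∑ i, p i = 1}

/-- A functionally generated portfolio map. -/
def IsFG {n : ℕ} (π : ↥(oS n) → ↥(cS n)) : Prop :=
  ∃ Φ : (Fin n → ℝ) → ℝ, (∀ p ∈ oS n, 0 < Φ p) ∧ ConcaveOn ℝ (oS n) Φ ∧
    ∀ p q : ↥(oS n),
      Φ (q : Fin n → ℝ) / Φ (p : Fin n → ℝ) ≤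
        ∑ i, (π p : Fin n → ℝ) i * ((q : Fin n → ℝ) i / (p : Fin n → ℝ) i)

/-- The family `FG` of all functionally generated portfolio maps, regarded as a subset of the
space of portfolio maps with the uniform structure (topology) of the supremum metric. -/
def FGset (n : ℕ) : Set (↥(oS n) →ᵤ ↥(cS n)) := {π | IsFG (UniformFun.toFun π)}

namespace Stmt15Aux

variable {n : ℕ}

def j0 (hn : 2 ≤ n) : Fin n := ⟨0, by omega⟩
def j1 (hn : 2 ≤ n) : Fin n := ⟨1, by omega⟩

lemma j0_ne_j1 (hn : 2 ≤ n) : j0 hn ≠ j1 hn := by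
  simp [j0, j1, Fin.ext_iff]

lemma oS_pos {p : Fin n → ℝ} (hp : p ∈ oS n) : ∀ i, 0 < p i := hp.1
lemma oS_sum {p : Fin n → ℝ} (hp : p ∈ oS n) : ∑ i, p i = 1 := hp.2

lemma p0_lt_one (hn : 2 ≤ n) {p : Fin n → ℝ} (hp : p ∈ oS n) : p (j0 hn) < 1 := by
  have h1 : p (j0 hn) + p (j1 hn) ≤ ∑ i, p i := by
    rw [← Finset.sum_pair (j0_ne_j1 hn)]
    exact Finset.sum_le_sum_of_subset_of_nonneg (Finset.subset_univ _)
      (fun i _ _ => (hp.1 i).le)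
  have h2 := hp.1 (j1 hn)
  rw [oS_sum hp] at h1
  linarith

/-- The stop-loss portfolio map at level θ. -/
def pim (hn : 2 ≤ n) (θ : ℝ) (p : ↥(oS n)) : Fin n → ℝ :=
  if (p : Fin n → ℝ) (j0 hn) ≤ θ then (fun i => if i = j0 hn then 1 else 0)
  else fun i => if i = j0 hn then 0
    else (p : Fin n → ℝ) i / (1 - (p : Fin n → ℝ) (j0 hn))

lemma pim_mem (hn : 2 ≤ n) (θ : ℝ) (p : ↥(oS n)) : pim hn θ p ∈ cS n := by
  have hp1 : (p : Fin n → ℝ) (j0 hn) < 1 := p0_lt_one hn p.2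
  have hden : 0 < 1 - (p : Fin n → ℝ) (j0 hn) := by linarith
  unfold pim
  split
  · refine ⟨fun i => ?_, ?_⟩
    · dsimp only; split <;> norm_num
    · simp
  · refine ⟨fun i => ?_, ?_⟩
    · dsimp only; split
      · exact le_refl 0
      · exact div_nonneg (oS_pos p.2 i).le hden.le
    · dsimp only
      have key : ∀ i : Fin n,
          (if i = j0 hn then (0:ℝ)
            else (p : Fin n → ℝ) i / (1 - (p : Fin n → ℝ) (j0 hn)))
          = (p : Fin n → ℝ) i / (1 - (p : Fin n → ℝ) (j0 hn))
            - (if i = j0 hn then (p : Fin n → ℝ) (j0 hn) / (1 - (p : Fin n → ℝ) (j0 hn)) else 0) := by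
        intro i
        rcases eq_or_ne i (j0 hn) with hi | hi <;> simp [hi]
      rw [Finset.sum_congr rfl fun i _ => key i, Finset.sum_sub_distrib,
        Finset.sum_ite_eq' Finset.univ (j0 hn), ← Finset.sum_div, oS_sum p.2]
      simp only [Finset.mem_univ, if_true]
      field_simp

/-- Generating function. -/
def genF (hn : 2 ≤ n) (θ : ℝ) : (Fin n → ℝ) → ℝ :=
  fun q => min ((1 - θ) * q (j0 hn)) (θ * (1 - q (j0 hn)))

lemma convex_oS : Convex ℝ (oS n) := by
  intro x hx y hy a b ha hb hab
  refine ⟨fun i => ?_, ?_⟩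
  · have hxi := hx.1 i
    have hyi := hy.1 i
    simp only [Pi.add_apply, Pi.smul_apply, smul_eq_mul]
    rcases ha.lt_or_eq with h | h
    · exact add_pos_of_pos_of_nonneg (mul_pos h hxi) (mul_nonneg hb hyi.le)
    · have hb1 : b = 1 := by linarith
      rw [← h, hb1]; simpa using hyi
  · simp only [Pi.add_apply, Pi.smul_apply, smul_eq_mul]
    rw [Finset.sum_add_distrib, ← Finset.mul_sum, ← Finset.mul_sum, oS_sum hx, oS_sum hy]
    simpa using hab

lemma concave_genF (hn : 2 ≤ n) (θ : ℝ) : ConcaveOn ℝ (oS n) (genF hn θ) := by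
  have h1 : ConcaveOn ℝ (oS n) (fun q : Fin n → ℝ => (1 - θ) * q (j0 hn)) := by
    refine ⟨convex_oS, fun x _ y _ a b _ _ hab => ?_⟩
    simp only [Pi.add_apply, Pi.smul_apply, smul_eq_mul]
    exact le_of_eq (by ring)
  have h2 : ConcaveOn ℝ (oS n) (fun q : Fin n → ℝ => θ * (1 - q (j0 hn))) := by
    refine ⟨convex_oS, fun x _ y _ a b _ _ hab => ?_⟩
    simp only [Pi.add_apply, Pi.smul_apply, smul_eq_mul]
    exact le_of_eq (by linear_combination θ * hab)
  have := h1.inf h2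
  convert this using 1
  all_goals rfl

lemma genF_pos (hn : 2 ≤ n) {θ : ℝ} (hθ : θ ∈ Set.Ioo (0:ℝ) 1) :
    ∀ p ∈ oS n, 0 < genF hn θ p := by
  intro p hp
  have h1 := p0_lt_one hn hp
  have h2 := hp.1 (j0 hn)
  exact lt_min (by nlinarith [hθ.1, hθ.2]) (by nlinarith [hθ.1])

/-- The stop-loss map as an element of the uniform-convergence space. -/
def Pmap (hn : 2 ≤ n) (θ : ℝ) : ↥(oS n) →ᵤ ↥(cS n) :=
  UniformFun.ofFun (fun p => ⟨pim hn θ p, pim_mem hn θ p⟩)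

lemma isFG_Pmap (hn : 2 ≤ n) {θ : ℝ} (hθ : θ ∈ Set.Ioo (0:ℝ) 1) :
    Pmap hn θ ∈ FGset n := by
  refine ⟨genF hn θ, genF_pos hn hθ, concave_genF hn θ, fun p q => ?_⟩
  have hp1 : (p : Fin n → ℝ) (j0 hn) < 1 := p0_lt_one hn p.2
  have hq1 : (q : Fin n → ℝ) (j0 hn) < 1 := p0_lt_one hn q.2
  have hp0 : 0 < (p : Fin n → ℝ) (j0 hn) := oS_pos p.2 (j0 hn)
  have hq0 : 0 < (q : Fin n → ℝ) (j0 hn) := oS_pos q.2 (j0 hn)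
  show genF hn θ _ / genF hn θ _ ≤ ∑ i, pim hn θ p i * _
  by_cases h : (p : Fin n → ℝ) (j0 hn) ≤ θ
  · have hsum : ∑ i, pim hn θ p i * ((q : Fin n → ℝ) i / (p : Fin n → ℝ) i)
        = (q : Fin n → ℝ) (j0 hn) / (p : Fin n → ℝ) (j0 hn) := by
      simp [pim, h, ite_mul]
    rw [hsum]
    have hθ1 : (0:ℝ) < 1 - θ := by linarith [hθ.2]
    have hΦp : genF hn θ (p : Fin n → ℝ) = (1 - θ) * (p : Fin n → ℝ) (j0 hn) :=
      min_eq_left (by nlinarith)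
    have hpd : 0 < (1 - θ) * (p : Fin n → ℝ) (j0 hn) := mul_pos hθ1 hp0
    calc genF hn θ (q : Fin n → ℝ) / genF hn θ (p : Fin n → ℝ)
        ≤ ((1 - θ) * (q : Fin n → ℝ) (j0 hn)) / ((1 - θ) * (p : Fin n → ℝ) (j0 hn)) := by
          rw [hΦp]
          exact (div_le_div_iff_of_pos_right hpd).mpr (min_le_left _ _)
      _ = (q : Fin n → ℝ) (j0 hn) / (p : Fin n → ℝ) (j0 hn) :=
          mul_div_mul_left _ _ (ne_of_gt hθ1)
  · have hdp : 0 < 1 - (p : Fin n → ℝ) (j0 hn) := by linarith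
    have hsum : ∑ i, pim hn θ p i * ((q : Fin n → ℝ) i / (p : Fin n → ℝ) i)
        = (1 - (q : Fin n → ℝ) (j0 hn)) / (1 - (p : Fin n → ℝ) (j0 hn)) := by
      have hterm : ∀ i : Fin n, pim hn θ p i * ((q : Fin n → ℝ) i / (p : Fin n → ℝ) i)
          = (q : Fin n → ℝ) i / (1 - (p : Fin n → ℝ) (j0 hn))
            - (if i = j0 hn then (q : Fin n → ℝ) (j0 hn) / (1 - (p : Fin n → ℝ) (j0 hn)) else 0) := by
        intro i
        rcases eq_or_ne i (j0 hn) with hi | hi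
        · subst hi; simp [pim, h]
        · have hpi : (p : Fin n → ℝ) i ≠ 0 := ne_of_gt (oS_pos p.2 i)
          simp only [pim, if_neg h, if_neg hi]
          field_simp
          ring
      rw [Finset.sum_congr rfl fun i _ => hterm i, Finset.sum_sub_distrib,
        Finset.sum_ite_eq' Finset.univ (j0 hn), ← Finset.sum_div, oS_sum q.2]
      simp only [Finset.mem_univ, if_true]
      rw [div_sub_div_same]
    rw [hsum]
    have hθ0 : (0:ℝ) < θ := hθ.1
    have hΦp : genF hn θ (p : Fin n → ℝ) = θ * (1 - (p : Fin n → ℝ) (j0 hn)) :=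
      min_eq_right (by nlinarith)
    have hpd : 0 < θ * (1 - (p : Fin n → ℝ) (j0 hn)) := mul_pos hθ0 hdp
    calc genF hn θ (q : Fin n → ℝ) / genF hn θ (p : Fin n → ℝ)
        ≤ (θ * (1 - (q : Fin n → ℝ) (j0 hn))) / (θ * (1 - (p : Fin n → ℝ) (j0 hn))) := by
          rw [hΦp]
          exact (div_le_div_iff_of_pos_right hpd).mpr (min_le_right _ _)
      _ = (1 - (q : Fin n → ℝ) (j0 hn)) / (1 - (p : Fin n → ℝ) (j0 hn)) :=
          mul_div_mul_left _ _ (ne_of_gt hθ0)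

/-- A witness point with first coordinate `t`. -/
def wit (hn : 2 ≤ n) (t : ℝ) : Fin n → ℝ :=
  fun i => if i = j0 hn then t else (1 - t) / ((n : ℝ) - 1)

lemma wit_mem (hn : 2 ≤ n) {t : ℝ} (ht : t ∈ Set.Ioo (0:ℝ) 1) : wit hn t ∈ oS n := by
  have hn1 : (0:ℝ) < (n : ℝ) - 1 := by
    have : (2:ℝ) ≤ (n : ℝ) := by exact_mod_cast hn
    linarith
  refine ⟨fun i => ?_, ?_⟩
  · simp only [wit]; split
    · exact ht.1
    · exact div_pos (by linarith [ht.2]) hn1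
  · unfold wit
    have key : ∀ i : Fin n, (if i = j0 hn then t else (1 - t) / ((n : ℝ) - 1))
        = (if i = j0 hn then t - (1 - t) / ((n : ℝ) - 1) else 0) + (1 - t) / ((n : ℝ) - 1) := by
      intro i; split <;> ring
    rw [Finset.sum_congr rfl fun i _ => key i, Finset.sum_add_distrib,
      Finset.sum_ite_eq' Finset.univ (j0 hn), Finset.sum_const, Finset.card_univ,
      Fintype.card_fin, nsmul_eq_mul]
    simp only [Finset.mem_univ, if_true]
    field_simp
    ring

lemma sep (hn : 2 ≤ n) {θ θ' : ℝ} (hθ' : θ' ∈ Set.Ioo (0:ℝ) 1) (hlt : θ < θ') :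
    ∃ x : ↥(oS n),
      1 ≤ dist (UniformFun.toFun (Pmap hn θ) x) (UniformFun.toFun (Pmap hn θ') x) := by
  refine ⟨⟨wit hn θ', wit_mem hn hθ'⟩, ?_⟩
  set x : ↥(oS n) := ⟨wit hn θ', wit_mem hn hθ'⟩ with hx
  have h1 : ((UniformFun.toFun (Pmap hn θ) x : ↥(cS n)) : Fin n → ℝ) (j0 hn) = 0 := by
    simp [Pmap, pim, wit, hlt.not_ge, hx]
  have h2 : ((UniformFun.toFun (Pmap hn θ') x : ↥(cS n)) : Fin n → ℝ) (j0 hn) = 1 := by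
    simp [Pmap, pim, wit, hx]
  calc (1:ℝ) = dist (0:ℝ) 1 := by simp [Real.dist_eq]
    _ = dist (((UniformFun.toFun (Pmap hn θ) x : ↥(cS n)) : Fin n → ℝ) (j0 hn))
          (((UniformFun.toFun (Pmap hn θ') x : ↥(cS n)) : Fin n → ℝ) (j0 hn)) := by
        rw [h1, h2]
    _ ≤ dist ((UniformFun.toFun (Pmap hn θ) x : ↥(cS n)) : Fin n → ℝ)
          ((UniformFun.toFun (Pmap hn θ') x : ↥(cS n)) : Fin n → ℝ) :=
        dist_le_pi_dist _ _ _
    _ = dist (UniformFun.toFun (Pmap hn θ) x) (UniformFun.toFun (Pmap hn θ') x) := rfl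

/-- Core lemma: no countable set approximates all the maps `Pmap θ` within `1/2` uniformly. -/
lemma core (hn : 2 ≤ n) (c : Set (↥(oS n) →ᵤ ↥(cS n))) (hc : c.Countable)
    (h : ∀ θ ∈ Set.Ioo (0:ℝ) 1, ∃ g ∈ c,
      ∀ x, dist (UniformFun.toFun (Pmap hn θ) x) (UniformFun.toFun g x) < 1/2) : False := by
  choose g hg hdist using h
  have key : ∀ θ, ∀ hθ : θ ∈ Set.Ioo (0:ℝ) 1, ∀ θ', ∀ hθ' : θ' ∈ Set.Ioo (0:ℝ) 1,
      θ < θ' → g θ hθ ≠ g θ' hθ' := by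
    intro θ hθ θ' hθ' hlt he
    obtain ⟨x, hx⟩ := sep hn hθ' hlt
    have d1 := hdist θ hθ x
    have d2 := hdist θ' hθ' x
    rw [he] at d1
    have htri := dist_triangle (UniformFun.toFun (Pmap hn θ) x)
      (UniformFun.toFun (g θ' hθ') x) (UniformFun.toFun (Pmap hn θ') x)
    rw [dist_comm (UniformFun.toFun (g θ' hθ') x)] at htri
    linarith
  haveI : Countable ↥c := hc.to_subtype
  have hcnt : Countable ↥(Set.Ioo (0:ℝ) 1) := by
    have hinj : Function.Injective
        (fun θ : ↥(Set.Ioo (0:ℝ) 1) => (⟨g θ.1 θ.2, hg θ.1 θ.2⟩ : ↥c)) := by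
      intro a b hab
      simp only [Subtype.mk.injEq] at hab
      by_contra hne
      have hne' : (a : ℝ) ≠ (b : ℝ) := fun hh => hne (Subtype.ext hh)
      rcases hne'.lt_or_gt with hlt | hlt
      · exact key a a.2 b b.2 hlt hab
      · exact key b b.2 a a.2 hlt hab.symm
    exact hinj.countable
  have h1 : (Cardinal.mk ↥(Set.Ioo (0:ℝ) 1)) ≤ Cardinal.aleph0 :=
    Cardinal.mk_le_aleph0_iff.mpr hcnt
  rw [Cardinal.mk_Ioo_real zero_lt_one] at h1
  exact absurd h1 (not_le.mpr Cardinal.aleph0_lt_continuum)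

end Stmt15Aux

open Stmt15Aux in
/-- Lemma 4.4: `FG`, with the supremum metric, is not separable;
in particular it is not totally bounded. -/
theorem stmt15 (n : ℕ) (hn : 2 ≤ n) :
    ¬ TopologicalSpace.SeparableSpace ↥(FGset n) ∧ ¬ TotallyBounded (FGset n) := by
  have V1 : {b : ↥(cS n) × ↥(cS n) | dist b.1 b.2 < 1/2} ∈ uniformity ↥(cS n) :=
    Metric.dist_mem_uniformity (by norm_num)
  constructor
  · intro hsep
    haveI := hsep
    have hIs : TopologicalSpace.IsSeparable (FGset n) :=
      TopologicalSpace.IsSeparable.of_subtype _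
    obtain ⟨c, hc, hsub⟩ := hIs
    refine core hn c hc ?_
    intro θ hθ
    have hmem : Pmap hn θ ∈ closure c := hsub (isFG_Pmap hn hθ)
    rw [mem_closure_iff_nhds_basis (UniformFun.hasBasis_nhds _ _ _)] at hmem
    obtain ⟨gθ, hgc, hgen⟩ := hmem _ V1
    exact ⟨gθ, hgc, fun x => hgen x⟩
  · intro htb
    obtain ⟨t, htf, hcov⟩ := htb (UniformFun.gen _ _ {b : ↥(cS n) × ↥(cS n) | dist b.1 b.2 < 1/2})
      ((UniformFun.hasBasis_uniformity _ _).mem_of_mem V1)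
    refine core hn t htf.countable ?_
    intro θ hθ
    have hx := hcov (isFG_Pmap hn hθ)
    simp only [Set.mem_iUnion] at hx
    obtain ⟨y, hy, hmem⟩ := hx
    exact ⟨y, hy, fun x => hmem x⟩
end
end

section
/- Let C_0 be the set of positive concave functions Φ: Δ_n → (0,∞) with Φ(ē) = 1, where ē = (1/n,…,1/n), and define the metric d(Φ,Ψ) = Σ_{m=1}^∞ 2^{−m} ρ_m(Φ,Ψ)/(1 + ρ_m(Φ,Ψ)) with ρ_m(Φ,Ψ) = max_{p ∈ K_m} |Φ(p) − Ψ(p)| and K_m = {p ∈ Δ_n : p_i ≥ 1/m for all i}. Then (C_0, d) is a compact metric space, and convergence in d is equivalent to locally uniform convergence on Δ_n. -/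
open MeasureTheory Filter Topology Finset

noncomputable section

/-- Concavity of a function defined on the open simplex. -/
def ConcOn {n : ℕ} (Φ : ↥(oS n) → ℝ) : Prop :=
  ∀ (p q : ↥(oS n)) (a b : ℝ), 0 ≤ a → 0 ≤ b → a + b = 1 →
    ∀ r : ↥(oS n), (r : Fin n → ℝ) = a • (p : Fin n → ℝ) + b • (q : Fin n → ℝ) →
      a * Φ p + b * Φ q ≤ Φ r

/-- `C₀`: positive concave functions on `Δₙ` normalized by `Φ(ē) = 1` at the barycenter
`ē = (1/n, …, 1/n)`. -/
def C0 (n : ℕ) : Set (↥(oS n) → ℝ) :=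
  {Φ | (∀ p, 0 < Φ p) ∧ ConcOn Φ ∧
    ∀ p : ↥(oS n), (∀ i, (p : Fin n → ℝ) i = (n : ℝ)⁻¹) → Φ p = 1}

/-- The compact exhaustion `K_m = {p ∈ Δₙ : pᵢ ≥ 1/m ∀ i}`. -/
def Km (n m : ℕ) : Set ↥(oS n) := {p | ∀ i, (m : ℝ)⁻¹ ≤ (p : Fin n → ℝ) i}

/-- `ρ_m(Φ,Ψ) = max_{p ∈ K_m} |Φ(p) − Ψ(p)|`. -/
def rho (n m : ℕ) (Φ Ψ : ↥(oS n) → ℝ) : ℝ := ⨆ p : ↥(Km n m), |Φ p.1 - Ψ p.1|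

/-- The metric `d(Φ,Ψ) = Σ_m 2^{−m} ρ_m/(1+ρ_m)` on `C₀`. -/
def dC0 (n : ℕ) (Φ Ψ : ↥(oS n) → ℝ) : ℝ :=
  ∑' m : ℕ, (1 / 2 : ℝ) ^ (m + 1) *
    (rho n (m + 1) Φ Ψ / (1 + rho n (m + 1) Φ Ψ))

namespace Stmt16Aux

open scoped BoundedContinuousFunction

variable {n : ℕ}

lemma npos (hn : 2 ≤ n) : (0:ℝ) < n := by
  have : (2:ℝ) ≤ n := by exact_mod_cast hn
  linarith

lemma ebar_mem (hn : 2 ≤ n) : (fun _ : Fin n => (n:ℝ)⁻¹) ∈ oS n := by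
  have h0 := npos hn
  refine ⟨fun i => by positivity, ?_⟩
  simp [Finset.sum_const, Finset.card_univ]
  field_simp

def ebar (hn : 2 ≤ n) : ↥(oS n) := ⟨_, ebar_mem hn⟩

lemma C0_ebar (hn : 2 ≤ n) {Φ : ↥(oS n) → ℝ} (h : Φ ∈ C0 n) : Φ (ebar hn) = 1 :=
  h.2.2 _ (fun _ => rfl)

lemma coord_le_one (p : ↥(oS n)) (i : Fin n) : (p : Fin n → ℝ) i ≤ 1 := by
  have h := Finset.single_le_sum (f := (p : Fin n → ℝ)) (fun j _ => (p.2.1 j).le)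
    (Finset.mem_univ i)
  rw [p.2.2] at h
  exact h

/-- Uniform bound: every `Φ ∈ C0 n` satisfies `Φ ≤ 2n`. -/
lemma C0_le (hn : 2 ≤ n) {Φ : ↥(oS n) → ℝ} (hΦ : Φ ∈ C0 n) (p : ↥(oS n)) :
    Φ p ≤ 2 * n := by
  have h0 := npos hn
  set a : ℝ := (2 * n)⁻¹ with ha
  have ha0 : 0 < a := by positivity
  have ha1 : a < (n:ℝ)⁻¹ := by
    rw [ha, inv_lt_inv₀ (by positivity) h0]
    linarith
  have hb0 : 0 < 1 - a := by
    have : a ≤ (2*2:ℝ)⁻¹ := by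
      rw [ha, inv_le_inv₀ (by positivity) (by norm_num)]
      have : (2:ℝ) ≤ n := by exact_mod_cast hn
      linarith
    norm_num at this
    linarith
  have hq : (fun i => ((n:ℝ)⁻¹ - a * (p : Fin n → ℝ) i) / (1 - a)) ∈ oS n := by
    constructor
    · intro i
      have h1 : a * (p : Fin n → ℝ) i ≤ a := by
        nlinarith [coord_le_one p i, (p.2.1 i)]
      apply div_pos _ hb0
      linarith
    · rw [← Finset.sum_div, Finset.sum_sub_distrib, ← Finset.mul_sum, p.2.2,
        Finset.sum_const, Finset.card_univ, Fintype.card_fin, nsmul_eq_mul,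
        mul_inv_cancel₀ (ne_of_gt h0), mul_one]
      field_simp
  have key := hΦ.2.1 p ⟨_, hq⟩ a (1 - a) ha0.le hb0.le (by ring) (ebar hn) ?_
  · rw [C0_ebar hn hΦ] at key
    have hqpos := hΦ.1 ⟨_, hq⟩
    have : a * Φ p ≤ 1 := by nlinarith
    rw [ha] at this
    rw [inv_mul_le_iff₀ (by positivity)] at this
    linarith
  · funext i
    show (n:ℝ)⁻¹ = _
    simp only [Pi.add_apply, Pi.smul_apply, smul_eq_mul]
    field_simp
    ring

lemma rho_nonneg (m : ℕ) (Φ Ψ : ↥(oS n) → ℝ) : 0 ≤ rho n m Φ Ψ :=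
  Real.iSup_nonneg fun p => abs_nonneg _

lemma rho_le_of_forall {m : ℕ} {Φ Ψ : ↥(oS n) → ℝ} {c : ℝ} (hc : 0 ≤ c)
    (h : ∀ p ∈ Km n m, |Φ p - Ψ p| ≤ c) : rho n m Φ Ψ ≤ c :=
  Real.iSup_le (fun p => h p.1 p.2) hc

lemma rho_le_4n (hn : 2 ≤ n) {Φ Ψ : ↥(oS n) → ℝ} (hΦ : Φ ∈ C0 n) (hΨ : Ψ ∈ C0 n)
    (m : ℕ) : rho n m Φ Ψ ≤ 4 * n := by
  refine rho_le_of_forall (by positivity) fun p _ => ?_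
  have h1 := hΦ.1 p; have h2 := hΨ.1 p
  have h3 := C0_le hn hΦ p; have h4 := C0_le hn hΨ p
  rw [abs_sub_le_iff]
  constructor <;> nlinarith

lemma abs_le_rho (hn : 2 ≤ n) {Φ Ψ : ↥(oS n) → ℝ} (hΦ : Φ ∈ C0 n) (hΨ : Ψ ∈ C0 n)
    {m : ℕ} {p : ↥(oS n)} (hp : p ∈ Km n m) : |Φ p - Ψ p| ≤ rho n m Φ Ψ := by
  refine le_ciSup_of_le ⟨4 * n, ?_⟩ ⟨p, hp⟩ le_rfl
  rintro x ⟨q, rfl⟩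
  have h1 := hΦ.1 q.1; have h2 := hΨ.1 q.1
  have h3 := C0_le hn hΦ q.1; have h4 := C0_le hn hΨ q.1
  rw [abs_sub_le_iff]
  constructor <;> nlinarith

lemma rho_comm (m : ℕ) (Φ Ψ : ↥(oS n) → ℝ) : rho n m Φ Ψ = rho n m Ψ Φ := by
  unfold rho
  congr 1
  funext p
  exact abs_sub_comm _ _

lemma rho_self (m : ℕ) (Φ : ↥(oS n) → ℝ) : rho n m Φ Φ = 0 :=
  le_antisymm (rho_le_of_forall le_rfl (by simp)) (rho_nonneg _ _ _)

lemma rho_triangle (hn : 2 ≤ n) {Φ Ψ X : ↥(oS n) → ℝ} (hΦ : Φ ∈ C0 n) (hΨ : Ψ ∈ C0 n)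
    (hX : X ∈ C0 n) (m : ℕ) : rho n m Φ X ≤ rho n m Φ Ψ + rho n m Ψ X := by
  refine rho_le_of_forall (add_nonneg (rho_nonneg m Φ Ψ) (rho_nonneg m Ψ X)) fun p hp => ?_
  calc |Φ p - X p| ≤ |Φ p - Ψ p| + |Ψ p - X p| := abs_sub_le _ _ _
    _ ≤ rho n m Φ Ψ + rho n m Ψ X :=
        add_le_add (abs_le_rho hn hΦ hΨ hp) (abs_le_rho hn hΨ hX hp)


/-! ### facts about `t ↦ t/(1+t)` and the series -/

lemma fdiv_nonneg {s : ℝ} (hs : 0 ≤ s) : 0 ≤ s / (1 + s) := by positivity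

lemma fdiv_le_one {s : ℝ} (hs : 0 ≤ s) : s / (1 + s) ≤ 1 := by
  rw [div_le_one (by linarith)]; linarith

lemma fdiv_le_self {s : ℝ} (hs : 0 ≤ s) : s / (1 + s) ≤ s := by
  rw [div_le_iff₀ (by linarith)]; nlinarith

lemma fdiv_mono {s t : ℝ} (hs : 0 ≤ s) (hst : s ≤ t) : s / (1 + s) ≤ t / (1 + t) := by
  rw [div_le_div_iff₀ (by linarith) (by linarith)]; nlinarith

lemma fdiv_subadd {s t : ℝ} (hs : 0 ≤ s) (ht : 0 ≤ t) :
    (s + t) / (1 + (s + t)) ≤ s / (1 + s) + t / (1 + t) := by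
  rw [div_add_div _ _ (by linarith : (1:ℝ) + s ≠ 0) (by linarith : (1:ℝ) + t ≠ 0),
    div_le_div_iff₀ (by linarith) (by positivity)]
  nlinarith [mul_nonneg hs ht, mul_nonneg (mul_nonneg hs ht) (add_nonneg hs ht)]

lemma fdiv_eq_zero {s : ℝ} (hs : 0 ≤ s) (h : s / (1 + s) = 0) : s = 0 := by
  rwa [div_eq_zero_iff, or_iff_left (by linarith : (1:ℝ) + s ≠ 0)] at h

lemma summable_half : Summable (fun m : ℕ => (1/2 : ℝ) ^ (m + 1)) := by
  simpa [pow_succ, mul_comm] using summable_geometric_two.mul_left (1/2 : ℝ)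

lemma summable_dC0 (Φ Ψ : ↥(oS n) → ℝ) :
    Summable (fun m : ℕ => (1/2 : ℝ) ^ (m + 1) *
      (rho n (m + 1) Φ Ψ / (1 + rho n (m + 1) Φ Ψ))) := by
  refine Summable.of_nonneg_of_le (fun m => ?_) (fun m => ?_) summable_half
  · have := rho_nonneg (n := n) (m + 1) Φ Ψ
    positivity
  · have h1 := fdiv_le_one (rho_nonneg (n := n) (m + 1) Φ Ψ)
    have h2 : (0:ℝ) ≤ (1/2 : ℝ) ^ (m + 1) := by positivity
    nlinarith

lemma dC0_nonneg (Φ Ψ : ↥(oS n) → ℝ) : 0 ≤ dC0 n Φ Ψ := by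
  refine tsum_nonneg fun m => ?_
  have := rho_nonneg (n := n) (m + 1) Φ Ψ
  positivity

lemma dC0_comm (Φ Ψ : ↥(oS n) → ℝ) : dC0 n Φ Ψ = dC0 n Ψ Φ := by
  unfold dC0
  congr 1
  funext m
  rw [rho_comm]

lemma dC0_self (Φ : ↥(oS n) → ℝ) : dC0 n Φ Φ = 0 := by
  unfold dC0
  simp [rho_self]

lemma dC0_triangle (hn : 2 ≤ n) {Φ Ψ X : ↥(oS n) → ℝ} (hΦ : Φ ∈ C0 n) (hΨ : Ψ ∈ C0 n)
    (hX : X ∈ C0 n) : dC0 n Φ X ≤ dC0 n Φ Ψ + dC0 n Ψ X := by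
  rw [dC0, dC0, dC0, ← Summable.tsum_add (summable_dC0 Φ Ψ) (summable_dC0 Ψ X)]
  refine Summable.tsum_le_tsum (fun m => ?_) (summable_dC0 Φ X)
    ((summable_dC0 Φ Ψ).add (summable_dC0 Ψ X))
  rw [← mul_add]
  refine mul_le_mul_of_nonneg_left ?_ (by positivity)
  calc rho n (m+1) Φ X / (1 + rho n (m+1) Φ X)
      ≤ (rho n (m+1) Φ Ψ + rho n (m+1) Ψ X) /
        (1 + (rho n (m+1) Φ Ψ + rho n (m+1) Ψ X)) :=
        fdiv_mono (rho_nonneg _ _ _) (rho_triangle hn hΦ hΨ hX (m+1))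
    _ ≤ _ := fdiv_subadd (rho_nonneg _ _ _) (rho_nonneg _ _ _)

lemma exists_Km_mem (hn : 2 ≤ n) (p : ↥(oS n)) : ∃ m : ℕ, p ∈ Km n (m + 1) := by
  have hne : Nonempty (Fin n) := ⟨⟨0, by omega⟩⟩
  obtain ⟨i0, -, hi0⟩ := Finset.exists_min_image Finset.univ (p : Fin n → ℝ)
    ⟨Classical.arbitrary (Fin n), Finset.mem_univ _⟩
  have hpos : 0 < (p : Fin n → ℝ) i0 := p.2.1 i0
  obtain ⟨m, hm⟩ := exists_nat_gt ((p : Fin n → ℝ) i0)⁻¹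
  refine ⟨m, fun i => ?_⟩
  have h1 : ((p : Fin n → ℝ) i0)⁻¹ < (m + 1 : ℕ) := by
    push_cast; push_cast at hm; linarith
  have h2 : ((m + 1 : ℕ) : ℝ)⁻¹ ≤ (p : Fin n → ℝ) i0 := by
    rw [inv_le_comm₀ (by positivity) hpos]
    exact h1.le
  exact h2.trans (hi0 i (Finset.mem_univ i))

lemma dC0_eq_zero_iff (hn : 2 ≤ n) {Φ Ψ : ↥(oS n) → ℝ} (hΦ : Φ ∈ C0 n) (hΨ : Ψ ∈ C0 n) :
    dC0 n Φ Ψ = 0 ↔ Φ = Ψ := by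
  constructor
  · intro h
    have hterm : ∀ m : ℕ, rho n (m + 1) Φ Ψ = 0 := by
      intro m
      have hle : (1/2 : ℝ) ^ (m + 1) *
          (rho n (m + 1) Φ Ψ / (1 + rho n (m + 1) Φ Ψ)) ≤ dC0 n Φ Ψ := by
        refine Summable.le_tsum (summable_dC0 Φ Ψ) m fun k _ => ?_
        have := rho_nonneg (n := n) (k + 1) Φ Ψ
        positivity
      rw [h] at hle
      have hge : (0:ℝ) ≤ (1/2 : ℝ) ^ (m + 1) *
          (rho n (m + 1) Φ Ψ / (1 + rho n (m + 1) Φ Ψ)) := by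
        have := rho_nonneg (n := n) (m + 1) Φ Ψ
        positivity
      have h0 : (1/2 : ℝ) ^ (m + 1) *
          (rho n (m + 1) Φ Ψ / (1 + rho n (m + 1) Φ Ψ)) = 0 := le_antisymm hle hge
      have h2 : rho n (m + 1) Φ Ψ / (1 + rho n (m + 1) Φ Ψ) = 0 := by
        have hp : (1/2 : ℝ) ^ (m + 1) ≠ 0 := by positivity
        exact (mul_eq_zero.mp h0).resolve_left hp
      exact fdiv_eq_zero (rho_nonneg _ _ _) h2
    funext p
    obtain ⟨m, hm⟩ := exists_Km_mem hn p
    have := abs_le_rho hn hΦ hΨ hm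
    rw [hterm m] at this
    have := abs_nonneg (Φ p - Ψ p)
    have h0 : |Φ p - Ψ p| = 0 := le_antisymm (by linarith) this
    rw [abs_eq_zero, sub_eq_zero] at h0
    exact h0
  · rintro rfl
    exact dC0_self Φ


/-! ### convergence transfer between `ρ_m` and `d` -/

lemma rho_le_dC0 (hn : 2 ≤ n) {Φ Ψ : ↥(oS n) → ℝ} (hΦ : Φ ∈ C0 n) (hΨ : Ψ ∈ C0 n) (m : ℕ) :
    rho n (m + 1) Φ Ψ ≤ (1 + 4 * n) * 2 ^ (m + 1) * dC0 n Φ Ψ := by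
  have hr0 := rho_nonneg (n := n) (m + 1) Φ Ψ
  have hr4 := rho_le_4n hn hΦ hΨ (m + 1)
  have hterm : (1/2 : ℝ) ^ (m + 1) *
      (rho n (m + 1) Φ Ψ / (1 + rho n (m + 1) Φ Ψ)) ≤ dC0 n Φ Ψ := by
    refine Summable.le_tsum (summable_dC0 Φ Ψ) m fun k _ => ?_
    have := rho_nonneg (n := n) (k + 1) Φ Ψ
    positivity
  have hf : rho n (m + 1) Φ Ψ / (1 + rho n (m + 1) Φ Ψ) ≤ 2 ^ (m + 1) * dC0 n Φ Ψ := by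
    have h2 : (0:ℝ) < (1/2 : ℝ) ^ (m + 1) := by positivity
    have h3 : ((1/2 : ℝ) ^ (m + 1)) * (2 ^ (m + 1) : ℝ) = 1 := by
      rw [← mul_pow]; norm_num
    have h4 : (2:ℝ) ^ (m+1) * ((1/2 : ℝ) ^ (m + 1) *
        (rho n (m + 1) Φ Ψ / (1 + rho n (m + 1) Φ Ψ))) ≤ 2 ^ (m+1) * dC0 n Φ Ψ :=
      mul_le_mul_of_nonneg_left hterm (by positivity)
    calc rho n (m + 1) Φ Ψ / (1 + rho n (m + 1) Φ Ψ)
        = (2:ℝ) ^ (m+1) * ((1/2 : ℝ) ^ (m + 1) *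
            (rho n (m + 1) Φ Ψ / (1 + rho n (m + 1) Φ Ψ))) := by
          rw [← mul_assoc, mul_comm ((2:ℝ)^(m+1)), h3, one_mul]
      _ ≤ _ := h4
  have key : rho n (m + 1) Φ Ψ =
      (rho n (m + 1) Φ Ψ / (1 + rho n (m + 1) Φ Ψ)) * (1 + rho n (m + 1) Φ Ψ) := by
    field_simp
  rw [key]
  calc (rho n (m + 1) Φ Ψ / (1 + rho n (m + 1) Φ Ψ)) * (1 + rho n (m + 1) Φ Ψ)
      ≤ (2 ^ (m + 1) * dC0 n Φ Ψ) * (1 + 4 * n) := by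
        refine mul_le_mul hf (by linarith) (by linarith) ?_
        have := dC0_nonneg (n := n) Φ Ψ
        positivity
    _ = (1 + 4 * n) * 2 ^ (m + 1) * dC0 n Φ Ψ := by ring

lemma tendsto_rho_of_dC0 (hn : 2 ≤ n) {Φ : ℕ → ↥(oS n) → ℝ} {Ψ : ↥(oS n) → ℝ}
    (hΦ : ∀ k, Φ k ∈ C0 n) (hΨ : Ψ ∈ C0 n)
    (h : Tendsto (fun k => dC0 n (Φ k) Ψ) atTop (𝓝 0)) (m : ℕ) :
    Tendsto (fun k => rho n (m + 1) (Φ k) Ψ) atTop (𝓝 0) := by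
  refine squeeze_zero (fun k => rho_nonneg _ _ _) (fun k => rho_le_dC0 hn (hΦ k) hΨ m) ?_
  simpa using h.const_mul ((1 + 4 * (n:ℝ)) * 2 ^ (m + 1))

lemma tendsto_dC0_of_rho {Φ : ℕ → ↥(oS n) → ℝ} {Ψ : ↥(oS n) → ℝ}
    (h : ∀ m : ℕ, Tendsto (fun k => rho n (m + 1) (Φ k) Ψ) atTop (𝓝 0)) :
    Tendsto (fun k => dC0 n (Φ k) Ψ) atTop (𝓝 0) := by
  have := tendsto_tsum_of_dominated_convergence (𝓕 := atTop) (g := fun _ : ℕ => (0:ℝ))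
    (f := fun k m => (1/2 : ℝ) ^ (m + 1) *
      (rho n (m + 1) (Φ k) Ψ / (1 + rho n (m + 1) (Φ k) Ψ)))
    (bound := fun m => (1/2 : ℝ) ^ (m + 1)) summable_half ?_ ?_
  · simpa [dC0, tsum_zero] using this
  · intro m
    refine squeeze_zero (g := fun k => (1/2 : ℝ) ^ (m + 1) * rho n (m + 1) (Φ k) Ψ)
      (fun k => ?_) (fun k => ?_) ?_
    · have := rho_nonneg (n := n) (m + 1) (Φ k) Ψ
      positivity
    · exact mul_le_mul_of_nonneg_left (fdiv_le_self (rho_nonneg _ _ _)) (by positivity)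
    · simpa using (h m).const_mul ((1/2 : ℝ) ^ (m + 1))
  · refine Eventually.of_forall fun k => fun m => ?_
    have h0 := rho_nonneg (n := n) (m + 1) (Φ k) Ψ
    rw [Real.norm_eq_abs, abs_of_nonneg (by positivity)]
    have h1 := fdiv_le_one h0
    have h2 : (0:ℝ) ≤ (1/2 : ℝ) ^ (m + 1) := by positivity
    nlinarith


/-! ### Lipschitz estimate on `K_m` -/

lemma C0_lip_aux (hn : 2 ≤ n) {Φ : ↥(oS n) → ℝ} (hΦ : Φ ∈ C0 n) {m : ℕ} (hm : 1 ≤ m)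
    {p q : ↥(oS n)} (hp : p ∈ Km n m) (hq : q ∈ Km n m) :
    Φ p - Φ q ≤ (4 * n * m) * dist p q := by
  have h0 := npos hn
  have hm0 : (0:ℝ) < m := by exact_mod_cast hm
  rcases eq_or_ne p q with rfl | hne
  · simp
  set d : ℝ := dist p q with hd
  have hd0 : 0 < d := dist_pos.mpr hne
  set t : ℝ := (2 * m)⁻¹ with ht
  have ht0 : 0 < t := by positivity
  have hcoord : ∀ i, |(q : Fin n → ℝ) i - (p : Fin n → ℝ) i| ≤ d := by
    intro i
    have h1 : dist ((q : Fin n → ℝ) i) ((p : Fin n → ℝ) i) ≤ dist (q : Fin n → ℝ) (p : Fin n → ℝ) :=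
      dist_le_pi_dist _ _ i
    rw [Real.dist_eq] at h1
    rw [hd, Subtype.dist_eq, dist_comm]
    exact h1
  have hr : (fun i => (q : Fin n → ℝ) i + (t / d) * ((q : Fin n → ℝ) i - (p : Fin n → ℝ) i))
      ∈ oS n := by
    constructor
    · intro i
      have h1 : (t / d) * |(q : Fin n → ℝ) i - (p : Fin n → ℝ) i| ≤ (t / d) * d :=
        mul_le_mul_of_nonneg_left (hcoord i) (by positivity)
      rw [div_mul_cancel₀ _ (ne_of_gt hd0)] at h1
      have h2 : (m:ℝ)⁻¹ ≤ (q : Fin n → ℝ) i := hq i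
      have h3 : -((t / d) * ((q : Fin n → ℝ) i - (p : Fin n → ℝ) i)) ≤ t := by
        calc -((t / d) * ((q : Fin n → ℝ) i - (p : Fin n → ℝ) i))
            ≤ |(t / d) * ((q : Fin n → ℝ) i - (p : Fin n → ℝ) i)| := neg_le_abs _
          _ = (t / d) * |(q : Fin n → ℝ) i - (p : Fin n → ℝ) i| := by
              rw [abs_mul, abs_of_nonneg (by positivity : (0:ℝ) ≤ t / d)]
          _ ≤ t := h1
      have h4 : t < (m:ℝ)⁻¹ := by
        rw [ht, inv_lt_inv₀ (by positivity) hm0]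
        linarith
      linarith
    · have hsq := q.2.2
      have hsp := p.2.2
      rw [Finset.sum_add_distrib, ← Finset.mul_sum, Finset.sum_sub_distrib, hsq, hsp]
      simp [hsq]
  have hcomb : (q : Fin n → ℝ) =
      (t / (t + d)) • (p : Fin n → ℝ) + (d / (t + d)) • (fun i =>
        (q : Fin n → ℝ) i + (t / d) * ((q : Fin n → ℝ) i - (p : Fin n → ℝ) i)) := by
    funext i
    simp only [Pi.add_apply, Pi.smul_apply, smul_eq_mul]
    field_simp
    ring
  have htd : 0 < t + d := by linarith
  have key := hΦ.2.1 p ⟨_, hr⟩ (t / (t + d)) (d / (t + d)) (by positivity) (by positivity)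
    (by field_simp) q hcomb
  have hrpos := hΦ.1 ⟨_, hr⟩
  have hq2n := C0_le hn hΦ q
  have hp0 := hΦ.1 p
  have key' : t * Φ p ≤ (t + d) * Φ q := by
    have h5 : (t / (t + d)) * Φ p ≤ Φ q := by nlinarith [mul_pos (div_pos hd0 htd) hrpos]
    calc t * Φ p = (t + d) * ((t / (t + d)) * Φ p) := by field_simp
      _ ≤ (t + d) * Φ q := by nlinarith
  have key2 : t * (Φ p - Φ q) ≤ d * (2 * n) := by
    have h6 : d * Φ q ≤ d * (2 * n) := mul_le_mul_of_nonneg_left hq2n hd0.le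
    nlinarith
  have h7 : t * ((4 * n * m) * d) = 2 * n * d := by
    rw [ht]
    field_simp
    ring
  have h8 : t * (Φ p - Φ q) ≤ t * ((4 * n * m) * d) := by
    rw [h7]
    linarith
  exact le_of_mul_le_mul_left h8 ht0

lemma C0_lip (hn : 2 ≤ n) {Φ : ↥(oS n) → ℝ} (hΦ : Φ ∈ C0 n) {m : ℕ} (hm : 1 ≤ m)
    {p q : ↥(oS n)} (hp : p ∈ Km n m) (hq : q ∈ Km n m) :
    |Φ p - Φ q| ≤ (4 * n * m) * dist p q := by
  rw [abs_sub_le_iff]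
  refine ⟨C0_lip_aux hn hΦ hm hp hq, ?_⟩
  rw [dist_comm]
  exact C0_lip_aux hn hΦ hm hq hp

/-! ### compactness of `K_m` -/

lemma isCompact_Km (hn : 2 ≤ n) {m : ℕ} (hm : 1 ≤ m) : IsCompact (Km n m) := by
  have hm0 : (0:ℝ) < m := by exact_mod_cast hm
  have h1 : IsCompact {x : Fin n → ℝ | (∀ i, (m:ℝ)⁻¹ ≤ x i) ∧ ∑ i, x i = 1} := by
    refine IsCompact.of_isClosed_subset
      (isCompact_Icc (a := fun _ : Fin n => (0:ℝ)) (b := fun _ => 1)) ?_ ?_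
    · refine IsClosed.inter ?_ (isClosed_eq (by fun_prop) continuous_const)
      have h : IsClosed (⋂ i : Fin n, {x : Fin n → ℝ | (m:ℝ)⁻¹ ≤ x i}) :=
        isClosed_iInter fun i => isClosed_le continuous_const (continuous_apply i)
      refine (congrArg IsClosed ?_).mpr h
      ext x
      simp only [Set.mem_iInter, Set.mem_setOf_eq]
      rfl
    · rintro x ⟨hx1, hx2⟩
      rw [Set.mem_Icc]
      constructor <;> intro i
      · exact le_trans (by positivity) (hx1 i)
      · show x i ≤ 1
        rw [← hx2]
        refine Finset.single_le_sum (fun j _ => ?_) (Finset.mem_univ i)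
        exact le_trans (by positivity) (hx1 j)
  have h2 : Subtype.val '' Km n m = {x : Fin n → ℝ | (∀ i, (m:ℝ)⁻¹ ≤ x i) ∧ ∑ i, x i = 1} := by
    ext x
    constructor
    · rintro ⟨p, hp, rfl⟩
      exact ⟨hp, p.2.2⟩
    · rintro ⟨ha, hb⟩
      exact ⟨⟨x, ⟨fun i => lt_of_lt_of_le (by positivity) (ha i), hb⟩⟩, ha, rfl⟩
  rw [Topology.IsEmbedding.subtypeVal.isCompact_iff, h2]
  exact h1


/-! ### sequential compactness -/

set_option synthInstance.maxHeartbeats 1000000 in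
set_option maxHeartbeats 1000000 in
lemma compactness (hn : 2 ≤ n) (Φ : ℕ → ↥(oS n) → ℝ) (hC : ∀ k, Φ k ∈ C0 n) :
    ∃ Ψ ∈ C0 n, ∃ φ : ℕ → ℕ, StrictMono φ ∧
      Tendsto (fun k => dC0 n (Φ (φ k)) Ψ) atTop (𝓝 0) := by
  classical
  have h0 := npos hn
  haveI hKc : ∀ m : ℕ, CompactSpace ↥(Km n (m+1)) := fun m =>
    isCompact_iff_compactSpace.mp (isCompact_Km hn (Nat.le_add_left 1 m))
  -- uniform Lipschitz bounds for the restrictions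
  have hlip : ∀ (m k : ℕ),
      LipschitzWith (Real.toNNReal (4 * n * ((m+1 : ℕ) : ℝ)))
        (fun x : ↥(Km n (m+1)) => Φ k x.1) := by
    intro m k
    refine LipschitzWith.of_dist_le_mul fun x y => ?_
    rw [Real.coe_toNNReal _ (by positivity), Real.dist_eq, Subtype.dist_eq]
    exact C0_lip hn (hC k) (m := m+1) (by omega) x.2 y.2
  have hbd : ∀ (k : ℕ) (x y : ↥(oS n)), dist (Φ k x) (Φ k y) ≤ 4 * n := by
    intro k x y
    rw [Real.dist_eq, abs_sub_le_iff]
    have h1 := (hC k).1 x; have h2 := (hC k).1 y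
    have h3 := C0_le hn (hC k) x; have h4 := C0_le hn (hC k) y
    constructor <;> nlinarith
  let F : ℕ → ∀ m : ℕ, (↥(Km n (m+1)) →ᵇ ℝ) := fun k m =>
    ⟨⟨fun x => Φ k x.1, (hlip m k).continuous⟩, ⟨4 * n, fun x y => hbd k x.1 y.1⟩⟩
  -- compactness of the closures of the ranges via Arzelà–Ascoli
  have hAcomp : ∀ m : ℕ, IsCompact (closure (Set.range fun k => F k m)) := by
    intro m
    haveI := hKc m
    refine BoundedContinuousFunction.arzela_ascoli (Set.Icc (0:ℝ) (2 * n)) isCompact_Icc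
      (Set.range fun k => F k m) ?_ ?_
    · rintro f x ⟨k, rfl⟩
      exact ⟨((hC k).1 x.1).le, C0_le hn (hC k) x.1⟩
    · refine Metric.equicontinuous_of_continuity_modulus
        (fun d => (4 * n * ((m+1 : ℕ) : ℝ)) * d) ?_ _ ?_
      · have : Tendsto (fun d : ℝ => (4 * n * ((m+1 : ℕ) : ℝ)) * d) (𝓝 0)
            (𝓝 ((4 * n * ((m+1 : ℕ) : ℝ)) * 0)) := tendsto_const_nhds.mul tendsto_id
        simpa using this
      · rintro x y ⟨f, k, rfl⟩
        have := (hlip m k).dist_le_mul x y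
        rwa [Real.coe_toNNReal _ (by positivity)] at this
  -- a convergent subsequence in the product space
  have hT : IsCompact (Set.univ.pi fun m => closure (Set.range fun k => F k m)) :=
    isCompact_univ_pi hAcomp
  have hseq : ∀ k, F k ∈ (Set.univ.pi fun m => closure (Set.range fun k => F k m)) :=
    fun k => Set.mem_univ_pi.mpr fun m => subset_closure ⟨k, rfl⟩
  obtain ⟨g, -, φ, hφ, hconv⟩ := hT.isSeqCompact hseq
  have hcm : ∀ m, Tendsto (fun k => F (φ k) m) atTop (𝓝 (g m)) := fun m =>
    (tendsto_pi_nhds.mp hconv) m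
  have hptK : ∀ m (x : ↥(Km n (m+1))),
      Tendsto (fun k => Φ (φ k) x.1) atTop (𝓝 (g m x)) := fun m x =>
    (BoundedContinuousFunction.tendsto_iff_tendstoUniformly.mp (hcm m)).tendsto_at x
  have hex : ∀ p : ↥(oS n), ∃ m, p ∈ Km n (m+1) := exists_Km_mem hn
  set Ψ : ↥(oS n) → ℝ :=
    fun p => g (Nat.find (hex p)) ⟨p, Nat.find_spec (hex p)⟩ with hΨdef
  have hpt : ∀ p, Tendsto (fun k => Φ (φ k) p) atTop (𝓝 (Ψ p)) := fun p =>
    hptK (Nat.find (hex p)) ⟨p, Nat.find_spec (hex p)⟩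
  have hΨg : ∀ m (x : ↥(Km n (m+1))), Ψ x.1 = g m x := fun m x =>
    tendsto_nhds_unique (hpt x.1) (hptK m x)
  -- the limit is in C0
  have hge : ∀ p, 0 ≤ Ψ p := fun p =>
    ge_of_tendsto (hpt p) (Eventually.of_forall fun k => ((hC (φ k)).1 p).le)
  have hconc : ConcOn Ψ := by
    intro p q a b ha hb hab r hr
    refine le_of_tendsto_of_tendsto' (((hpt p).const_mul a).add ((hpt q).const_mul b))
      (hpt r) fun k => ?_
    exact (hC (φ k)).2.1 p q a b ha hb hab r hr
  have hnorm : ∀ p : ↥(oS n), (∀ i, (p : Fin n → ℝ) i = (n:ℝ)⁻¹) → Ψ p = 1 := by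
    intro p hp
    refine tendsto_nhds_unique (hpt p) ?_
    exact tendsto_const_nhds.congr fun k => ((hC (φ k)).2.2 p hp).symm
  have hone : Ψ (ebar hn) = 1 := hnorm _ fun _ => rfl
  have hpos : ∀ p, 0 < Ψ p := by
    intro p
    obtain ⟨i0, -, hi0⟩ := Finset.exists_min_image Finset.univ ((p : Fin n → ℝ))
      ⟨⟨0, by omega⟩, Finset.mem_univ _⟩
    have hε : 0 < (p : Fin n → ℝ) i0 := p.2.1 i0
    set ε : ℝ := (p : Fin n → ℝ) i0 with hεdef
    set l : ℝ := min 2⁻¹ (ε/2) with hldef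
    have hl0 : 0 < l := lt_min (by norm_num) (by positivity)
    have hl1 : l ≤ 2⁻¹ := min_le_left _ _
    have hlε : l ≤ ε/2 := min_le_right _ _
    have h1l : 0 < 1 - l := by
      have : l ≤ 2⁻¹ := hl1
      norm_num at this ⊢
      linarith
    have hn1 : (1:ℝ) ≤ n := by
      have : (2:ℝ) ≤ n := by exact_mod_cast hn
      linarith
    have hninv : (n:ℝ)⁻¹ ≤ 1 := by
      rw [inv_le_one_iff₀]
      right; exact hn1
    have hr : (fun i => ((p : Fin n → ℝ) i - l * (n:ℝ)⁻¹) / (1 - l)) ∈ oS n := by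
      constructor
      · intro i
        have h2 : ε ≤ (p : Fin n → ℝ) i := hi0 i (Finset.mem_univ i)
        have h3 : l * (n:ℝ)⁻¹ ≤ l := by nlinarith
        apply div_pos _ h1l
        linarith
      · have hnl : (n:ℝ) * (l * (n:ℝ)⁻¹) = l := by field_simp
        rw [← Finset.sum_div, Finset.sum_sub_distrib, p.2.2, Finset.sum_const,
          Finset.card_univ, Fintype.card_fin, nsmul_eq_mul, hnl]
        field_simp
    have key := hconc (ebar hn) ⟨_, hr⟩ l (1 - l) hl0.le h1l.le (by ring) p ?_
    · rw [hone] at key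
      have := hge ⟨_, hr⟩
      nlinarith
    · funext i
      show (p : Fin n → ℝ) i = _
      simp only [Pi.add_apply, Pi.smul_apply, smul_eq_mul]
      show (p : Fin n → ℝ) i = l * (n:ℝ)⁻¹ + (1 - l) * _
      field_simp
      ring
  -- convergence of the ρ's, hence of d
  have hrho : ∀ m, Tendsto (fun k => rho n (m+1) (Φ (φ k)) Ψ) atTop (𝓝 0) := by
    intro m
    have hd : Tendsto (fun k => dist (F (φ k) m) (g m)) atTop (𝓝 0) :=
      tendsto_iff_dist_tendsto_zero.mp (hcm m)
    refine squeeze_zero (fun k => rho_nonneg _ _ _) (fun k => ?_) hd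
    refine rho_le_of_forall dist_nonneg fun p hp => ?_
    have h1 : |Φ (φ k) p - Ψ p| = dist (F (φ k) m ⟨p, hp⟩) (g m ⟨p, hp⟩) := by
      rw [Real.dist_eq, hΨg m ⟨p, hp⟩]
      rfl
    rw [h1]
    exact BoundedContinuousFunction.dist_coe_le_dist _
  exact ⟨Ψ, ⟨hpos, hconc, hnorm⟩, φ, hφ, tendsto_dC0_of_rho hrho⟩


/-! ### equivalence with locally uniform convergence -/

lemma exists_Km_lt (hn : 2 ≤ n) (p : ↥(oS n)) :
    ∃ m : ℕ, ∀ i, ((m + 1 : ℕ) : ℝ)⁻¹ < (p : Fin n → ℝ) i := by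
  obtain ⟨i0, -, hi0⟩ := Finset.exists_min_image Finset.univ ((p : Fin n → ℝ))
    ⟨⟨0, by omega⟩, Finset.mem_univ _⟩
  have hpos : 0 < (p : Fin n → ℝ) i0 := p.2.1 i0
  obtain ⟨m, hm⟩ := exists_nat_gt ((p : Fin n → ℝ) i0)⁻¹
  refine ⟨m, fun i => ?_⟩
  have h1 : ((p : Fin n → ℝ) i0)⁻¹ < ((m + 1 : ℕ) : ℝ) := by push_cast; linarith
  have h2 : ((m + 1 : ℕ) : ℝ)⁻¹ < (p : Fin n → ℝ) i0 := by
    rwa [inv_lt_comm₀ (by positivity) hpos]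
  exact h2.trans_le (hi0 i (Finset.mem_univ i))

lemma tlu_of_dC0 (hn : 2 ≤ n) {Φ : ℕ → ↥(oS n) → ℝ} {Ψ : ↥(oS n) → ℝ}
    (hΦC : ∀ k, Φ k ∈ C0 n) (hΨC : Ψ ∈ C0 n)
    (h : Tendsto (fun k => dC0 n (Φ k) Ψ) atTop (𝓝 0)) :
    TendstoLocallyUniformly Φ Ψ atTop := by
  have hrho := tendsto_rho_of_dC0 hn hΦC hΨC h
  rw [Metric.tendstoLocallyUniformly_iff]
  intro ε hε x
  obtain ⟨m, hm⟩ := exists_Km_lt hn x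
  refine ⟨{q : ↥(oS n) | ∀ i, ((m + 1 : ℕ) : ℝ)⁻¹ < (q : Fin n → ℝ) i}, ?_, ?_⟩
  · have hopen : IsOpen {q : ↥(oS n) | ∀ i, ((m + 1 : ℕ) : ℝ)⁻¹ < (q : Fin n → ℝ) i} := by
      have heq : {q : ↥(oS n) | ∀ i, ((m + 1 : ℕ) : ℝ)⁻¹ < (q : Fin n → ℝ) i} =
          Subtype.val ⁻¹' (⋂ i, {x : Fin n → ℝ | ((m + 1 : ℕ) : ℝ)⁻¹ < x i}) := by
        ext q
        simp [Set.mem_iInter]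
      rw [heq]
      exact ((isOpen_iInter_of_finite fun i =>
        isOpen_lt continuous_const (continuous_apply i))).preimage continuous_subtype_val
    exact hopen.mem_nhds hm
  · filter_upwards [Metric.tendsto_nhds.mp (hrho m) ε hε] with k hk y hy
    have hyK : y ∈ Km n (m + 1) := fun i => (hy i).le
    have h1 := abs_le_rho hn (hΦC k) hΨC hyK
    rw [Real.dist_eq, sub_zero, abs_of_nonneg (rho_nonneg _ _ _)] at hk
    rw [Real.dist_eq, abs_sub_comm]
    exact h1.trans_lt hk

lemma rho_tendsto_of_tlu (hn : 2 ≤ n) {Φ : ℕ → ↥(oS n) → ℝ} {Ψ : ↥(oS n) → ℝ}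
    (h : TendstoLocallyUniformly Φ Ψ atTop) (m : ℕ) :
    Tendsto (fun k => rho n (m + 1) (Φ k) Ψ) atTop (𝓝 0) := by
  have hc : IsCompact (Km n (m + 1)) := isCompact_Km hn (by omega)
  have h2 : TendstoUniformlyOn Φ Ψ atTop (Km n (m + 1)) :=
    (tendstoLocallyUniformlyOn_iff_tendstoUniformlyOn_of_compact hc).mp
      h.tendstoLocallyUniformlyOn
  rw [Metric.tendstoUniformlyOn_iff] at h2
  rw [Metric.tendsto_nhds]
  intro ε hε
  filter_upwards [h2 (ε / 2) (by linarith)] with k hk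
  rw [Real.dist_eq, sub_zero, abs_of_nonneg (rho_nonneg _ _ _)]
  have hle : rho n (m + 1) (Φ k) Ψ ≤ ε / 2 := by
    refine rho_le_of_forall (by linarith) fun p hp => ?_
    have := (hk p hp).le
    rwa [Real.dist_eq, abs_sub_comm] at this
  linarith

end Stmt16Aux

/-- Lemma 4.5: `(C₀, d)` is a compact metric space, and convergence in `d`
is equivalent to locally uniform convergence on `Δₙ`. -/
theorem stmt16 {n : ℕ} (hn : 2 ≤ n) :
    (∀ Φ ∈ C0 n, ∀ Ψ ∈ C0 n, (dC0 n Φ Ψ = 0 ↔ Φ = Ψ)) ∧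
    (∀ Φ ∈ C0 n, ∀ Ψ ∈ C0 n, dC0 n Φ Ψ = dC0 n Ψ Φ) ∧
    (∀ Φ ∈ C0 n, ∀ Ψ ∈ C0 n, ∀ X ∈ C0 n, dC0 n Φ X ≤ dC0 n Φ Ψ + dC0 n Ψ X) ∧
    (∀ Φ : ℕ → ↥(oS n) → ℝ, (∀ k, Φ k ∈ C0 n) →
      ∃ Ψ ∈ C0 n, ∃ φ : ℕ → ℕ, StrictMono φ ∧
        Tendsto (fun k => dC0 n (Φ (φ k)) Ψ) atTop (𝓝 0)) ∧
    (∀ Φ : ℕ → ↥(oS n) → ℝ, (∀ k, Φ k ∈ C0 n) → ∀ Ψ ∈ C0 n,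
      (Tendsto (fun k => dC0 n (Φ k) Ψ) atTop (𝓝 0) ↔
        TendstoLocallyUniformly Φ Ψ atTop)) := by
  refine ⟨fun Φ hΦ Ψ hΨ => Stmt16Aux.dC0_eq_zero_iff hn hΦ hΨ,
    fun Φ _ Ψ _ => Stmt16Aux.dC0_comm Φ Ψ,
    fun Φ hΦ Ψ hΨ X hX => Stmt16Aux.dC0_triangle hn hΦ hΨ hX,
    fun Φ hC => Stmt16Aux.compactness hn Φ hC,
    fun Φ hC Ψ hΨ => ⟨fun h => Stmt16Aux.tlu_of_dC0 hn hC hΨ h,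
      fun h => Stmt16Aux.tendsto_dC0_of_rho fun m => Stmt16Aux.rho_tendsto_of_tlu hn h m⟩⟩
end
end

section
/- Suppose the market weight sequence {μ(t)} ⊂ Δ_n satisfies Assumption (M). Then for each t ≥ 0 there exists a functionally generated portfolio π* ∈ FG such that V_{π*}(t) = sup_{π ∈ FG} V_π(t); i.e., the supremum of the relative value over the family of all functionally generated portfolios is attained. -/
open MeasureTheory Filter Topology Finset

noncomputable section

/-- Relative value of a (time-dependent) weight sequence `w` along market path `μ`. -/
def relV {n : ℕ} (μ w : ℕ → Fin n → ℝ) : ℕ → ℝ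
  | 0 => 1
  | t + 1 => relV μ w t * ∑ i, w t i * (μ (t + 1) i / μ t i)

/-- Relative value of a portfolio map. -/
def pV {n : ℕ} (μ : ℕ → ↥(oS n)) (π : ↥(oS n) → ↥(cS n)) : ℕ → ℝ :=
  relV (fun t => (μ t : Fin n → ℝ)) (fun t => (π (μ t) : Fin n → ℝ))

/-- Assumption (M): relative returns bounded between `1/M` and `M`. -/
def AssumptionM {n : ℕ} (M : ℝ) (μ : ℕ → ↥(oS n)) : Prop :=
  ∀ t i, 1 / M ≤ (μ (t + 1) : Fin n → ℝ) i / (μ t : Fin n → ℝ) i ∧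
    (μ (t + 1) : Fin n → ℝ) i / (μ t : Fin n → ℝ) i ≤ M

lemma relV_eq_prod {n : ℕ} (μ w : ℕ → Fin n → ℝ) (t : ℕ) :
    relV μ w t = ∏ s ∈ Finset.range t, ∑ i, w s i * (μ (s + 1) i / μ s i) := by
  induction t with
  | zero => simp [relV]
  | succ t ih => rw [relV, ih, Finset.prod_range_succ]

lemma concaveOn_min {E : Type*} [AddCommGroup E] [Module ℝ E] {S : Set E} {f g : E → ℝ}
    (hf : ConcaveOn ℝ S f) (hg : ConcaveOn ℝ S g) : ConcaveOn ℝ S (fun x => min (f x) (g x)) := by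
  refine ⟨hf.1, fun x hx y hy a b ha hb hab => ?_⟩
  have h1 := hf.2 hx hy ha hb hab
  have h2 := hg.2 hx hy ha hb hab
  have e1 : a • min (f x) (g x) + b • min (f y) (g y) ≤ a • f x + b • f y := by
    gcongr
    exacts [min_le_left _ _, min_le_left _ _]
  have e2 : a • min (f x) (g x) + b • min (f y) (g y) ≤ a • g x + b • g y := by
    gcongr
    exacts [min_le_right _ _, min_le_right _ _]
  exact le_min (e1.trans h1) (e2.trans h2)

lemma concaveOn_inf' {ι E : Type*} [AddCommGroup E] [Module ℝ E] {S : Set E}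
    (s : Finset ι) (hs : s.Nonempty) (f : ι → E → ℝ)
    (hf : ∀ i ∈ s, ConcaveOn ℝ S (f i)) :
    ConcaveOn ℝ S (fun x => s.inf' hs (fun i => f i x)) := by
  induction hs using Finset.Nonempty.cons_induction with
  | singleton i => simpa using hf i (by simp)
  | cons i s hi hs ih =>
    have h1 : ConcaveOn ℝ S (f i) := hf i (by simp)
    have h2 := ih (fun j hj => hf j (by simp [hj]))
    have : (fun x => (Finset.cons i s hi).inf' (Finset.cons_nonempty hi) fun j => f j x)
        = fun x => min (f i x) (s.inf' hs fun j => f j x) := by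
      funext x; exact Finset.inf'_cons (α := ℝ) (H := hs) (f := fun j => f j x)
    rw [this]
    exact concaveOn_min h1 h2

lemma convex_oS (n : ℕ) : Convex ℝ (oS n) := by
  intro x hx y hy a b ha hb hab
  refine ⟨fun i => ?_, ?_⟩
  · rcases ha.lt_or_eq with h | h
    · have h1 : 0 < a * x i := mul_pos h (hx.1 i)
      have h2 : 0 ≤ b * y i := mul_nonneg hb (hy.1 i).le
      simp only [Pi.add_apply, Pi.smul_apply, smul_eq_mul]
      linarith
    · have hb1 : b = 1 := by linarith
      simp only [Pi.add_apply, Pi.smul_apply, smul_eq_mul, ← h, hb1]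
      simpa using hy.1 i
  · simp only [Pi.add_apply, Pi.smul_apply, smul_eq_mul]
    rw [Finset.sum_add_distrib, ← Finset.mul_sum, ← Finset.mul_sum, hx.2, hy.2]
    simpa using hab

lemma concaveOn_linear {n : ℕ} (a : Fin n → ℝ) :
    ConcaveOn ℝ (oS n) (fun q => ∑ i, a i * q i) := by
  refine ⟨convex_oS n, fun x hx y hy c d hc hd hcd => ?_⟩
  apply le_of_eq
  simp only [Pi.add_apply, Pi.smul_apply, smul_eq_mul]
  rw [Finset.mul_sum, Finset.mul_sum, ← Finset.sum_add_distrib]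
  refine Finset.sum_congr rfl fun i _ => by ring

lemma isClosed_cS (n : ℕ) : IsClosed (cS n) := by
  have h1 : IsClosed {p : Fin n → ℝ | ∀ i, 0 ≤ p i} := by
    have : {p : Fin n → ℝ | ∀ i, 0 ≤ p i} = ⋂ i, {p | 0 ≤ p i} := by ext; simp
    rw [this]; exact isClosed_iInter fun i => isClosed_le continuous_const (continuous_apply i)
  have h2 : IsClosed {p : Fin n → ℝ | ∑ i, p i = 1} :=
    isClosed_eq (continuous_finset_sum _ fun i _ => continuous_apply i) continuous_const
  exact h1.inter h2

lemma isCompact_cS (n : ℕ) : IsCompact (cS n) := by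
  refine IsCompact.of_isClosed_subset (isCompact_Icc (a := (0 : Fin n → ℝ)) (b := 1))
    (isClosed_cS n) ?_
  intro p hp
  constructor
  · intro i; exact hp.1 i
  · intro i
    have : p i ≤ ∑ j, p j := Finset.single_le_sum (fun j _ => hp.1 j) (Finset.mem_univ i)
    simpa [hp.2] using this

/-- Lemma 4.7: the supremum of `V_π(t)` over the family of functionally
generated portfolios is attained. -/
theorem stmt17 {n : ℕ} (hn : 2 ≤ n) (M : ℝ) (hM : 0 < M)
    (μ : ℕ → ↥(oS n)) (hAM : AssumptionM M μ) :
    ∀ t : ℕ, ∃ π : ↥(oS n) → ↥(cS n), IsFG π ∧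
      ∀ η : ↥(oS n) → ↥(cS n), IsFG η → pV μ η t ≤ pV μ π t := by
  intro t
  rcases Nat.eq_zero_or_pos t with ht | ht
  · -- trivial case t = 0
    subst ht
    refine ⟨fun p => ⟨(p : Fin n → ℝ), fun i => (p.2.1 i).le, p.2.2⟩, ?_, ?_⟩
    · refine ⟨fun _ => 1, fun _ _ => one_pos, concaveOn_const 1 (convex_oS n), fun p q => ?_⟩
      have : ∀ i, (p : Fin n → ℝ) i * ((q : Fin n → ℝ) i / (p : Fin n → ℝ) i)
          = (q : Fin n → ℝ) i := fun i => by
        rw [mul_comm, div_mul_cancel₀ _ (p.2.1 i).ne']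
      simp only [this]
      rw [q.2.2]
      norm_num
    · intro η _
      simp [pV, relV]
  ·
    -- main case: t ≥ 1
    haveI hT : Nonempty (Fin t) := ⟨⟨0, ht⟩⟩
    haveI hN : Nonempty (Fin n) := ⟨⟨0, by omega⟩⟩
    set m : Fin t → Fin n → ℝ := fun s => (μ s.val : Fin n → ℝ) with hm
    have hmpos : ∀ s i, 0 < m s i := fun s i => (μ s.val).2.1 i
    have hmsum : ∀ s, ∑ i, m s i = 1 := fun s => (μ s.val).2.2
    set R : ℝ := Finset.univ.sup' Finset.univ_nonempty
      (fun x : Fin t × Fin t × Fin n => m x.2.1 x.2.2 / m x.1 x.2.2) with hRdef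
    have hRb : ∀ s s' i, m s' i / m s i ≤ R := fun s s' i =>
      Finset.le_sup' (fun x : Fin t × Fin t × Fin n => m x.2.1 x.2.2 / m x.1 x.2.2)
        (Finset.mem_univ (s, s', i))
    have hR1 : 1 ≤ R := by
      have h := hRb ⟨0, ht⟩ ⟨0, ht⟩ ⟨0, by omega⟩
      rwa [div_self (hmpos _ _).ne'] at h
    have hR0 : 0 < R := lt_of_lt_of_le one_pos hR1
    set K : Set ((Fin t → Fin n → ℝ) × (Fin t → ℝ)) :=
      {x | (∀ s, x.1 s ∈ cS n) ∧ (∀ s, 1 / R ≤ x.2 s ∧ x.2 s ≤ R) ∧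
        (∀ s s', x.2 s' ≤ x.2 s * ∑ i, x.1 s i * (m s' i / m s i)) ∧
        (∀ s s', m s = m s' → x.1 s = x.1 s')} with hK
    have hKmem : (m, fun _ => (1 : ℝ)) ∈ K := by
      refine ⟨fun s => ⟨fun i => (hmpos s i).le, hmsum s⟩,
        fun s => ⟨by rw [div_le_one hR0]; exact hR1, hR1⟩, fun s s' => ?_, fun s s' h => h⟩
      have : ∀ i, m s i * (m s' i / m s i) = m s' i := fun i => by
        rw [mul_comm, div_mul_cancel₀ _ (hmpos s i).ne']
      simp only [this, hmsum s', one_mul, le_refl]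
    have hKcomp : IsCompact K := by
      have hC : IsCompact ((Set.univ.pi fun _ : Fin t => cS n) ×ˢ
          (Set.Icc (fun _ : Fin t => 1 / R) (fun _ => R))) :=
        (isCompact_univ_pi fun _ => isCompact_cS n).prod isCompact_Icc
      refine IsCompact.of_isClosed_subset hC ?_ ?_
      · have : K = (⋂ s, {x : (Fin t → Fin n → ℝ) × (Fin t → ℝ) | x.1 s ∈ cS n}) ∩
            ((⋂ s, {x : (Fin t → Fin n → ℝ) × (Fin t → ℝ) | 1 / R ≤ x.2 s ∧ x.2 s ≤ R}) ∩
            ((⋂ s, ⋂ s', {x : (Fin t → Fin n → ℝ) × (Fin t → ℝ) |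
                x.2 s' ≤ x.2 s * ∑ i, x.1 s i * (m s' i / m s i)}) ∩
            (⋂ s, ⋂ s', {x : (Fin t → Fin n → ℝ) × (Fin t → ℝ) |
                m s = m s' → x.1 s = x.1 s'}))) := by
          ext x
          simp only [hK, Set.mem_setOf_eq, Set.mem_inter_iff, Set.mem_iInter]
        rw [this]
        refine IsClosed.inter (isClosed_iInter fun s => ?_) (IsClosed.inter
          (isClosed_iInter fun s => ?_) (IsClosed.inter
          (isClosed_iInter fun s => isClosed_iInter fun s' => ?_)
          (isClosed_iInter fun s => isClosed_iInter fun s' => ?_)))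
        · exact (isClosed_cS n).preimage ((continuous_apply s).comp continuous_fst)
        · have : {x : (Fin t → Fin n → ℝ) × (Fin t → ℝ) | 1 / R ≤ x.2 s ∧ x.2 s ≤ R}
              = (fun x : (Fin t → Fin n → ℝ) × (Fin t → ℝ) => x.2 s) ⁻¹' Set.Icc (1 / R) R := by
            ext x; simp [Set.mem_Icc]
          rw [this]
          exact isClosed_Icc.preimage ((continuous_apply s).comp continuous_snd)
        · refine isClosed_le ((continuous_apply s').comp continuous_snd) ?_
          exact ((continuous_apply s).comp continuous_snd).mul (continuous_finset_sum _
            fun i _ => by fun_prop)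
        · by_cases h : m s = m s'
          · have : {x : (Fin t → Fin n → ℝ) × (Fin t → ℝ) | m s = m s' → x.1 s = x.1 s'}
                = {x : (Fin t → Fin n → ℝ) × (Fin t → ℝ) | x.1 s = x.1 s'} := by
              ext x; simp [h]
            rw [this]
            exact isClosed_eq ((continuous_apply s).comp continuous_fst)
              ((continuous_apply s').comp continuous_fst)
          · have : {x : (Fin t → Fin n → ℝ) × (Fin t → ℝ) | m s = m s' → x.1 s = x.1 s'}
                = Set.univ := by ext x; simp [h]
            rw [this]; exact isClosed_univ
      · intro x hx
        exact ⟨fun s _ => hx.1 s, fun s => (hx.2.1 s).1, fun s => (hx.2.1 s).2⟩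
    set g : (Fin t → Fin n → ℝ) × (Fin t → ℝ) → ℝ :=
      fun x => ∏ s : Fin t, ∑ i, x.1 s i * ((μ (s.val + 1) : Fin n → ℝ) i / m s i) with hg
    have hgcont : Continuous g := continuous_finset_prod _ fun s _ =>
      continuous_finset_sum _ fun i _ => by fun_prop
    obtain ⟨⟨w, c⟩, hmemK, hmax'⟩ := hKcomp.exists_isMaxOn ⟨_, hKmem⟩ hgcont.continuousOn
    have hmax : ∀ y ∈ K, g y ≤ g (w, c) := fun y hy => hmax' hy
    obtain ⟨hw, hc, hcon, hcons⟩ := hmemK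
    set coef : Fin t → Fin n → ℝ := fun s i => c s * w s i / m s i with hcoef
    set L : Fin t → (Fin n → ℝ) → ℝ := fun s q => ∑ i, coef s i * q i with hL
    have hcpos : ∀ s, 0 < c s := fun s => lt_of_lt_of_le (by positivity) (hc s).1
    have hcoefnn : ∀ s i, 0 ≤ coef s i :=
      fun s i => div_nonneg (mul_nonneg (hcpos s).le ((hw s).1 i)) (hmpos s i).le
    have hLe : ∀ s q, L s q = c s * ∑ i, w s i * (q i / m s i) := by
      intro s q
      rw [hL, Finset.mul_sum]
      refine Finset.sum_congr rfl fun i _ => ?_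
      show c s * w s i / m s i * q i = c s * (w s i * (q i / m s i))
      rw [div_eq_mul_inv, div_eq_mul_inv]; ring
    have hLself : ∀ s, L s (m s) = c s := by
      intro s
      rw [hLe]
      have : ∀ i ∈ Finset.univ, w s i * (m s i / m s i) = w s i := fun i _ => by
        rw [div_self (hmpos s i).ne', mul_one]
      rw [Finset.sum_congr rfl this, (hw s).2, mul_one]
    have hLm : ∀ s s', c s ≤ L s' (m s) := by
      intro s s'
      rw [hLe]
      exact hcon s' s
    have hLpos : ∀ s, ∀ q ∈ oS n, 0 < L s q := by
      intro s q hq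
      rw [hLe]
      refine mul_pos (hcpos s) ?_
      have hex : ∃ i, 0 < w s i := by
        by_contra h
        push_neg at h
        have h0 : ∑ i, w s i ≤ 0 := Finset.sum_nonpos fun i _ => h i
        rw [(hw s).2] at h0
        linarith
      obtain ⟨i₀, hi₀⟩ := hex
      refine Finset.sum_pos' (fun i _ => mul_nonneg ((hw s).1 i)
        (div_nonneg (hq.1 i).le (hmpos s i).le)) ⟨i₀, Finset.mem_univ i₀, ?_⟩
      exact mul_pos hi₀ (div_pos (hq.1 i₀) (hmpos s i₀))
    have hsel : ∀ p : ↥(oS n), ∃ s₀ : Fin t,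
        (∀ s, L s₀ ↑p ≤ L s ↑p) ∧ ((∃ s, m s = ↑p) → m s₀ = ↑p) := by
      intro p
      by_cases h : ∃ s, m s = (p : Fin n → ℝ)
      · obtain ⟨s₁, hs₁⟩ := h
        refine ⟨s₁, fun s => ?_, fun _ => hs₁⟩
        rw [← hs₁, hLself s₁]
        exact hLm s₁ s
      · obtain ⟨s₀, _, hmin⟩ := Finset.exists_min_image Finset.univ
          (fun s => L s (p : Fin n → ℝ)) Finset.univ_nonempty
        exact ⟨s₀, fun s => hmin s (Finset.mem_univ s), fun hc => absurd hc h⟩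
    set sel : ↥(oS n) → Fin t := fun p => (hsel p).choose with hseld
    have hsel1 : ∀ p : ↥(oS n), ∀ s, L (sel p) ↑p ≤ L s ↑p := fun p => (hsel p).choose_spec.1
    have hsel2 : ∀ p : ↥(oS n), (∃ s, m s = ↑p) → m (sel p) = ↑p :=
      fun p => (hsel p).choose_spec.2
    have hηmem : ∀ p : ↥(oS n),
        (fun i => coef (sel p) i * (p : Fin n → ℝ) i / L (sel p) ↑p) ∈ cS n := by
      intro p
      constructor
      · intro i
        exact div_nonneg (mul_nonneg (hcoefnn _ i) (p.2.1 i).le) (hLpos _ _ p.2).le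
      · rw [← Finset.sum_div]
        exact div_self (hLpos _ _ p.2).ne'
    set η : ↥(oS n) → ↥(cS n) :=
      fun p => ⟨fun i => coef (sel p) i * (p : Fin n → ℝ) i / L (sel p) ↑p, hηmem p⟩ with hη
    have hηval : ∀ s : Fin t, ((η (μ s.val) : Fin n → ℝ)) = w s := by
      intro s
      set p : ↥(oS n) := μ s.val with hp
      have hmsel : m (sel p) = (p : Fin n → ℝ) := hsel2 p ⟨s, rfl⟩
      have hwsel : w s = w (sel p) := hcons s (sel p) (by rw [hmsel])
      funext i
      show c (sel p) * w (sel p) i / m (sel p) i * (p : Fin n → ℝ) i / L (sel p) ↑p = w s i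
      rw [← hmsel, hLself]
      rw [div_mul_cancel₀ _ (hmpos (sel p) i).ne']
      rw [mul_div_cancel_left₀ _ (hcpos (sel p)).ne']
      rw [hwsel]
    refine ⟨η, ?_, ?_⟩
    · -- IsFG η
      refine ⟨fun q => Finset.univ.inf' Finset.univ_nonempty (fun s => L s q), ?_, ?_, ?_⟩
      · intro q hq
        exact (Finset.lt_inf'_iff _).2 fun s _ => hLpos s q hq
      · exact concaveOn_inf' Finset.univ Finset.univ_nonempty L
          (fun s _ => concaveOn_linear (coef s))
      · intro p q
        have hΦp : Finset.univ.inf' Finset.univ_nonempty (fun s => L s ↑p) = L (sel p) ↑p :=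
          le_antisymm (Finset.inf'_le _ (Finset.mem_univ (sel p)))
            (Finset.le_inf' _ _ fun s _ => hsel1 p s)
        have hΦq : Finset.univ.inf' Finset.univ_nonempty (fun s => L s ↑q) ≤ L (sel p) ↑q :=
          Finset.inf'_le _ (Finset.mem_univ (sel p))
        have hterm : ∀ i, (η p : Fin n → ℝ) i * ((q : Fin n → ℝ) i / (p : Fin n → ℝ) i)
            = coef (sel p) i * (q : Fin n → ℝ) i / L (sel p) ↑p := by
          intro i
          show coef (sel p) i * (p : Fin n → ℝ) i / L (sel p) ↑p * ((q : Fin n → ℝ) i / (p : Fin n → ℝ) i)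
              = coef (sel p) i * (q : Fin n → ℝ) i / L (sel p) ↑p
          have hpi : (p : Fin n → ℝ) i ≠ 0 := (p.2.1 i).ne'
          have hLp : L (sel p) ↑p ≠ 0 := (hLpos (sel p) ↑p p.2).ne'
          field_simp
        have hsum : ∑ i, (η p : Fin n → ℝ) i * ((q : Fin n → ℝ) i / (p : Fin n → ℝ) i)
            = L (sel p) ↑q / L (sel p) ↑p := by
          rw [Finset.sum_congr rfl fun i _ => hterm i, ← Finset.sum_div]
        show (Finset.univ.inf' Finset.univ_nonempty fun s => L s (q : Fin n → ℝ)) /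
            (Finset.univ.inf' Finset.univ_nonempty fun s => L s (p : Fin n → ℝ)) ≤ _
        rw [hsum, hΦp]
        exact (div_le_div_iff_of_pos_right (hLpos (sel p) ↑p p.2)).2 hΦq
    · -- maximality
      intro η' hη'
      obtain ⟨Φ', hp', hc', hi'⟩ := hη'
      set z : Fin t := ⟨0, ht⟩ with hz
      have hΦ's : ∀ s : Fin t, 0 < Φ' ↑(μ s.val) := fun s => hp' _ (μ s.val).2
      set w' : Fin t → Fin n → ℝ := fun s => ↑(η' (μ s.val)) with hw'
      set c' : Fin t → ℝ := fun s => Φ' ↑(μ s.val) / Φ' ↑(μ z.val) with hc'def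
      have hratio : ∀ s s' : Fin t, Φ' ↑(μ s'.val) / Φ' ↑(μ s.val)
          ≤ ∑ i, w' s i * (m s' i / m s i) := fun s s' => hi' (μ s.val) (μ s'.val)
      have hsumR : ∀ s s' : Fin t, ∑ i, w' s i * (m s' i / m s i) ≤ R := by
        intro s s'
        calc ∑ i, w' s i * (m s' i / m s i) ≤ ∑ i, w' s i * R := by
              refine Finset.sum_le_sum fun i _ => ?_
              exact mul_le_mul_of_nonneg_left (hRb s s' i) ((η' (μ s.val)).2.1 i)
          _ = R := by rw [← Finset.sum_mul, (η' (μ s.val)).2.2, one_mul]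
      have hmemK' : (w', c') ∈ K := by
        refine ⟨fun s => (η' (μ s.val)).2, fun s => ⟨?_, ?_⟩, fun s s' => ?_, fun s s' h => ?_⟩
        · -- 1/R ≤ c' s
          have h1 : Φ' ↑(μ z.val) / Φ' ↑(μ s.val) ≤ R := (hratio s z).trans (hsumR s z)
          rw [hc'def]
          rw [div_le_iff₀ (hΦ's s)] at h1
          rw [div_le_div_iff₀ hR0 (hΦ's z)]
          nlinarith [hΦ's s, hΦ's z]
        · -- c' s ≤ R
          have h1 : Φ' ↑(μ s.val) / Φ' ↑(μ z.val) ≤ R := (hratio z s).trans (hsumR z s)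
          exact h1
        · -- constraint
          have h1 : c' s' = c' s * (Φ' ↑(μ s'.val) / Φ' ↑(μ s.val)) := by
            show Φ' ↑(μ s'.val) / Φ' ↑(μ z.val)
                = Φ' ↑(μ s.val) / Φ' ↑(μ z.val) * (Φ' ↑(μ s'.val) / Φ' ↑(μ s.val))
            have h2 := (hΦ's s).ne'
            have h3 := (hΦ's z).ne'
            field_simp
          show c' s' ≤ c' s * ∑ i, w' s i * (m s' i / m s i)
          rw [h1]
          exact mul_le_mul_of_nonneg_left (hratio s s')
            (div_nonneg (hΦ's s).le (hΦ's z).le)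
        · -- consistency
          have h2 : μ s.val = μ s'.val := Subtype.ext h
          show (η' (μ s.val) : Fin n → ℝ) = (η' (μ s'.val) : Fin n → ℝ)
          rw [h2]
      have hgle : g (w', c') ≤ g (w, c) := hmax (w', c') hmemK'
      have hpv' : pV μ η' t = g (w', c') := by
        rw [pV, relV_eq_prod, hg]
        rw [← Fin.prod_univ_eq_prod_range
          (fun k => ∑ i, (η' (μ k) : Fin n → ℝ) i * ((μ (k + 1) : Fin n → ℝ) i / (μ k : Fin n → ℝ) i)) t]
      have hpv : pV μ η t = g (w, c) := by
        rw [pV, relV_eq_prod, hg]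
        rw [← Fin.prod_univ_eq_prod_range
          (fun k => ∑ i, (η (μ k) : Fin n → ℝ) i * ((μ (k + 1) : Fin n → ℝ) i / (μ k : Fin n → ℝ) i)) t]
        refine Finset.prod_congr rfl fun s _ => ?_
        rw [hηval s]
      rw [hpv', hpv]
      exact hgle
end
end

section
/- Suppose the market weight sequence {μ(t)} ⊂ Δ_n satisfies Assumption (M) with constant M, and the empirical measures ℙ_t converge weakly to a Borel probability measure ℙ on S = {(p,q) ∈ Δ_n × Δ_n : 1/M ≤ q_i/p_i ≤ M for all i} that is absolutely continuous with respect to Lebesgue measure. Then for every functionally generated portfolio π ∈ FG the asymptotic growth rate exists and W(π) = lim_{t→∞} (1/t) log V_π(t) = lim_{t→∞} ∫_S ℓ_π dℙ_t = ∫_S ℓ_π dℙ. -/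
open MeasureTheory Filter Topology Finset
open scoped UniformConvergence ENNReal

noncomputable section

/-- Integral of an arbitrary function against a (normalized) finite sum of Dirac measures. -/
lemma integral_avg_dirac {X : Type*} [MeasurableSpace X] [MeasurableSingletonClass X]
    (x : ℕ → X) (f : X → ℝ) (t : ℕ) :
    ∫ y, f y ∂((t : ℝ≥0∞)⁻¹ • ∑ s ∈ Finset.range t, Measure.dirac (x s)) =
      (∑ s ∈ Finset.range t, f (x s)) / t := by
  have hint : ∀ s : ℕ, Integrable f (Measure.dirac (x s)) := by
    intro s
    refine ⟨(aestronglyMeasurable_const (b := f (x s))).congr (ae_eq_dirac f).symm, ?_⟩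
    rw [HasFiniteIntegral, lintegral_dirac]
    exact ENNReal.coe_lt_top
  rw [integral_smul_measure, integral_finset_sum_measure fun s _ => hint s]
  simp only [integral_dirac]
  rw [ENNReal.toReal_inv, ENNReal.toReal_natCast, smul_eq_mul, inv_mul_eq_div]

lemma usc_limsup_le {X : Type*} [MetricSpace X] [MeasurableSpace X] [OpensMeasurableSpace X]
    [Nonempty X]
    (P : Measure X) [IsProbabilityMeasure P] (x : ℕ → X)
    (hweak : ∀ f : BoundedContinuousFunction X ℝ,
      Tendsto (fun t : ℕ => (∑ s ∈ Finset.range t, f (x s)) / t) atTop (𝓝 (∫ y, f y ∂P)))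
    (f : X → ℝ) (hf : UpperSemicontinuous f) (C : ℝ) (hC : ∀ y, |f y| ≤ C) :
    limsup (fun t : ℕ => (∑ s ∈ Finset.range t, f (x s)) / t) atTop ≤ ∫ y, f y ∂P := by
  have hC0 : 0 ≤ C := le_trans (abs_nonneg _) (hC (Classical.arbitrary X))
  set F : ℕ → X → ℝ := fun k y => ⨆ z, (f z - k * dist y z) with hF
  have hbdd : ∀ (k : ℕ) (y : X), BddAbove (Set.range fun z => f z - (k:ℝ) * dist y z) := by
    intro k y
    refine ⟨C, ?_⟩
    rintro _ ⟨z, rfl⟩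
    show f z - (k:ℝ) * dist y z ≤ C
    have := (abs_le.1 (hC z)).2
    nlinarith [dist_nonneg (x := y) (y := z), Nat.cast_nonneg (α := ℝ) k]
  have hFge : ∀ k y, f y ≤ F k y := by
    intro k y
    have := le_ciSup (hbdd k y) y
    simpa using this
  have hFle : ∀ k y, F k y ≤ C := by
    intro k y
    refine ciSup_le fun z => ?_
    have := (abs_le.1 (hC z)).2
    nlinarith [dist_nonneg (x := y) (y := z), Nat.cast_nonneg (α := ℝ) k]
  have hFlb : ∀ k y, -C ≤ F k y := fun k y => le_trans (abs_le.1 (hC y)).1 (hFge k y)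
  -- Lipschitz property
  have hlip : ∀ k y y', F k y ≤ F k y' + k * dist y y' := by
    intro k y y'
    refine ciSup_le fun z => ?_
    have h1 : f z - (k:ℝ) * dist y z ≤ (f z - k * dist y' z) + k * dist y y' := by
      have h2 := dist_triangle y' y z
      have h3 : dist y y' = dist y' y := dist_comm y y'
      nlinarith [Nat.cast_nonneg (α := ℝ) k]
    exact h1.trans (add_le_add_left (le_ciSup (hbdd k y') z) _)
  have hcont : ∀ k : ℕ, Continuous (F k) := by
    intro k
    have : LipschitzWith (k : NNReal) (F k) := by
      refine LipschitzWith.of_dist_le_mul ?_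
      intro y y'
      rw [Real.dist_eq, abs_le]
      constructor
      · have := hlip k y' y
        rw [dist_comm y' y] at this
        push_cast
        linarith
      · have := hlip k y y'
        push_cast
        linarith
    exact this.continuous
  -- pointwise convergence F k y → f y
  have hptwise : ∀ y, Tendsto (fun k => F k y) atTop (𝓝 (f y)) := by
    intro y
    rw [Metric.tendsto_atTop]
    intro ε hε
    obtain ⟨δ, hδ, hball⟩ : ∃ δ > 0, ∀ z, dist z y < δ → f z < f y + ε / 2 := by
      have := hf y (f y + ε / 2) (by linarith)
      rw [Metric.eventually_nhds_iff] at this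
      obtain ⟨δ, hδ, h⟩ := this
      exact ⟨δ, hδ, fun z hz => h hz⟩
    obtain ⟨K, hK⟩ : ∃ K : ℕ, 2 * C ≤ K * δ := by
      obtain ⟨K, hK⟩ := exists_nat_ge (2 * C / δ)
      exact ⟨K, by rw [div_le_iff₀ hδ] at hK; linarith⟩
    refine ⟨K, fun k hk => ?_⟩
    have hFk : F k y ≤ f y + ε / 2 := by
      refine ciSup_le fun z => ?_
      by_cases hz : dist z y < δ
      · have := hball z hz
        nlinarith [dist_nonneg (x := y) (y := z), Nat.cast_nonneg (α := ℝ) k]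
      · push_neg at hz
        have hkK : (K : ℝ) ≤ (k : ℝ) := Nat.cast_le.2 hk
        have h1 : 2 * C ≤ (k : ℝ) * dist y z := by
          rw [dist_comm]
          calc 2 * C ≤ K * δ := hK
          _ ≤ (k : ℝ) * dist z y := by
              apply mul_le_mul hkK hz hδ.le (Nat.cast_nonneg k)
        have := (abs_le.1 (hC z)).2
        have := (abs_le.1 (hC y)).1
        nlinarith
    have h2 : f y ≤ F k y := hFge k y
    rw [Real.dist_eq, abs_lt]
    constructor <;> linarith
  -- bounded continuous function wrapper
  set Fb : ℕ → BoundedContinuousFunction X ℝ := fun k =>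
    BoundedContinuousFunction.ofNormedAddCommGroup (F k) (hcont k) C
      (fun y => by rw [Real.norm_eq_abs, abs_le]; exact ⟨hFlb k y, hFle k y⟩) with hFb
  have hFbcoe : ∀ k y, Fb k y = F k y := fun k y => rfl
  -- integrals converge
  have hinttendsto : Tendsto (fun k => ∫ y, F k y ∂P) atTop (𝓝 (∫ y, f y ∂P)) := by
    refine tendsto_integral_of_dominated_convergence (fun _ => C)
      (fun k => (hcont k).aestronglyMeasurable) (integrable_const C) ?_ ?_
    · intro k
      filter_upwards with y
      rw [Real.norm_eq_abs, abs_le]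
      exact ⟨hFlb k y, hFle k y⟩
    · filter_upwards with y using hptwise y
  refine ge_of_tendsto' hinttendsto fun k => ?_
  have hsum : ∀ t : ℕ, (∑ s ∈ Finset.range t, f (x s)) / t ≤
      (∑ s ∈ Finset.range t, F k (x s)) / t := by
    intro t
    rcases Nat.eq_zero_or_pos t with h | h
    · simp [h]
    · have ht : (0:ℝ) < t := by exact_mod_cast h
      exact (div_le_div_iff_of_pos_right ht).2 (Finset.sum_le_sum fun i _ => hFge k (x i))
  have hlb : ∀ t : ℕ, -C ≤ (∑ s ∈ Finset.range t, f (x s)) / t := by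
    intro t
    rcases Nat.eq_zero_or_pos t with h | h
    · simp [h]; linarith
    · have ht : (0:ℝ) < t := by exact_mod_cast h
      rw [le_div_iff₀ ht]
      calc -C * t = ∑ _s ∈ Finset.range t, (-C) := by
            rw [Finset.sum_const, Finset.card_range]; ring
      _ ≤ _ := Finset.sum_le_sum fun s _ => (abs_le.1 (hC (x s))).1
  have hub : ∀ t : ℕ, (∑ s ∈ Finset.range t, F k (x s)) / t ≤ C := by
    intro t
    rcases Nat.eq_zero_or_pos t with h | h
    · simp [h]; linarith
    · have ht : (0:ℝ) < t := by exact_mod_cast h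
      rw [div_le_iff₀ ht]
      calc (∑ s ∈ Finset.range t, F k (x s)) ≤ ∑ _s ∈ Finset.range t, C :=
            Finset.sum_le_sum fun s _ => hFle k (x s)
      _ = C * t := by rw [Finset.sum_const, Finset.card_range]; ring
  have hlimeq : limsup (fun t : ℕ => (∑ s ∈ Finset.range t, F k (x s)) / t) atTop =
      ∫ y, F k y ∂P := (hweak (Fb k)).limsup_eq
  calc limsup (fun t : ℕ => (∑ s ∈ Finset.range t, f (x s)) / t) atTop
      ≤ limsup (fun t : ℕ => (∑ s ∈ Finset.range t, F k (x s)) / t) atTop := by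
        exact limsup_le_limsup (Eventually.of_forall hsum)
          (isCoboundedUnder_le_of_le atTop hlb) (isBoundedUnder_of ⟨C, hub⟩)
      _ = ∫ y, F k y ∂P := hlimeq

lemma lsc_le_liminf {X : Type*} [MetricSpace X] [MeasurableSpace X] [OpensMeasurableSpace X]
    [Nonempty X]
    (P : Measure X) [IsProbabilityMeasure P] (x : ℕ → X)
    (hweak : ∀ f : BoundedContinuousFunction X ℝ,
      Tendsto (fun t : ℕ => (∑ s ∈ Finset.range t, f (x s)) / t) atTop (𝓝 (∫ y, f y ∂P)))
    (f : X → ℝ) (hf : LowerSemicontinuous f) (C : ℝ) (hC : ∀ y, |f y| ≤ C) :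
    ∫ y, f y ∂P ≤ liminf (fun t : ℕ => (∑ s ∈ Finset.range t, f (x s)) / t) atTop := by
  have hC0 : 0 ≤ C := le_trans (abs_nonneg _) (hC (Classical.arbitrary X))
  set F : ℕ → X → ℝ := fun k y => ⨅ z, (f z + k * dist y z) with hF
  have hbdd : ∀ (k : ℕ) (y : X), BddBelow (Set.range fun z => f z + (k:ℝ) * dist y z) := by
    intro k y
    refine ⟨-C, ?_⟩
    rintro _ ⟨z, rfl⟩
    show -C ≤ f z + (k:ℝ) * dist y z
    have := (abs_le.1 (hC z)).1
    nlinarith [dist_nonneg (x := y) (y := z), Nat.cast_nonneg (α := ℝ) k]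
  have hFge : ∀ (k : ℕ) (y : X), F k y ≤ f y := by
    intro k y
    have := ciInf_le (hbdd k y) y
    simpa using this
  have hFle : ∀ (k : ℕ) (y : X), -C ≤ F k y := by
    intro k y
    refine le_ciInf fun z => ?_
    have := (abs_le.1 (hC z)).1
    nlinarith [dist_nonneg (x := y) (y := z), Nat.cast_nonneg (α := ℝ) k]
  have hFub : ∀ (k : ℕ) (y : X), F k y ≤ C := fun k y => le_trans (hFge k y) (abs_le.1 (hC y)).2
  have hlip : ∀ (k : ℕ) (y y' : X), F k y' - k * dist y y' ≤ F k y := by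
    intro k y y'
    refine le_ciInf fun z => ?_
    have h1 : F k y' ≤ f z + (k:ℝ) * dist y' z := ciInf_le (hbdd k y') z
    have h2 := dist_triangle y' y z
    have h3 : dist y y' = dist y' y := dist_comm y y'
    nlinarith [Nat.cast_nonneg (α := ℝ) k]
  have hcont : ∀ k : ℕ, Continuous (F k) := by
    intro k
    have : LipschitzWith (k : NNReal) (F k) := by
      refine LipschitzWith.of_dist_le_mul ?_
      intro y y'
      rw [Real.dist_eq, abs_le]
      constructor
      · have := hlip k y y'
        push_cast
        linarith
      · have := hlip k y' y
        rw [dist_comm y' y] at this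
        push_cast
        linarith
    exact this.continuous
  have hptwise : ∀ y, Tendsto (fun k => F k y) atTop (𝓝 (f y)) := by
    intro y
    rw [Metric.tendsto_atTop]
    intro ε hε
    obtain ⟨δ, hδ, hball⟩ : ∃ δ > 0, ∀ z, dist z y < δ → f y - ε / 2 < f z := by
      have := hf y (f y - ε / 2) (by linarith)
      rw [Metric.eventually_nhds_iff] at this
      obtain ⟨δ, hδ, h⟩ := this
      exact ⟨δ, hδ, fun z hz => h hz⟩
    obtain ⟨K, hK⟩ : ∃ K : ℕ, 2 * C ≤ K * δ := by
      obtain ⟨K, hK⟩ := exists_nat_ge (2 * C / δ)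
      exact ⟨K, by rw [div_le_iff₀ hδ] at hK; linarith⟩
    refine ⟨K, fun k hk => ?_⟩
    have hFk : f y - ε / 2 ≤ F k y := by
      refine le_ciInf fun z => ?_
      by_cases hz : dist z y < δ
      · have := hball z hz
        nlinarith [dist_nonneg (x := y) (y := z), Nat.cast_nonneg (α := ℝ) k,
          dist_comm y z ▸ (rfl : dist y z = dist y z)]
      · push_neg at hz
        have hkK : (K : ℝ) ≤ (k : ℝ) := Nat.cast_le.2 hk
        have h1 : 2 * C ≤ (k : ℝ) * dist y z := by
          rw [dist_comm]
          calc 2 * C ≤ K * δ := hK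
          _ ≤ (k : ℝ) * dist z y := mul_le_mul hkK hz hδ.le (Nat.cast_nonneg k)
        have := (abs_le.1 (hC z)).1
        have := (abs_le.1 (hC y)).2
        nlinarith
    have h2 : F k y ≤ f y := hFge k y
    rw [Real.dist_eq, abs_lt]
    constructor <;> linarith
  set Fb : ℕ → BoundedContinuousFunction X ℝ := fun k =>
    BoundedContinuousFunction.ofNormedAddCommGroup (F k) (hcont k) C
      (fun y => by rw [Real.norm_eq_abs, abs_le]; exact ⟨hFle k y, hFub k y⟩) with hFb
  have hinttendsto : Tendsto (fun k => ∫ y, F k y ∂P) atTop (𝓝 (∫ y, f y ∂P)) := by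
    refine tendsto_integral_of_dominated_convergence (fun _ => C)
      (fun k => (hcont k).aestronglyMeasurable) (integrable_const C) ?_ ?_
    · intro k
      filter_upwards with y
      rw [Real.norm_eq_abs, abs_le]
      exact ⟨hFle k y, hFub k y⟩
    · filter_upwards with y using hptwise y
  refine le_of_tendsto' hinttendsto fun k => ?_
  have hsum : ∀ t : ℕ, (∑ s ∈ Finset.range t, F k (x s)) / t ≤
      (∑ s ∈ Finset.range t, f (x s)) / t := by
    intro t
    rcases Nat.eq_zero_or_pos t with h | h
    · simp [h]
    · have ht : (0:ℝ) < t := by exact_mod_cast h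
      exact (div_le_div_iff_of_pos_right ht).2 (Finset.sum_le_sum fun i _ => hFge k (x i))
  have hub : ∀ t : ℕ, (∑ s ∈ Finset.range t, f (x s)) / t ≤ C := by
    intro t
    rcases Nat.eq_zero_or_pos t with h | h
    · simp [h]; linarith
    · have ht : (0:ℝ) < t := by exact_mod_cast h
      rw [div_le_iff₀ ht]
      calc (∑ s ∈ Finset.range t, f (x s)) ≤ ∑ _s ∈ Finset.range t, C :=
            Finset.sum_le_sum fun s _ => (abs_le.1 (hC (x s))).2
      _ = C * t := by rw [Finset.sum_const, Finset.card_range]; ring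
  have hlb : ∀ t : ℕ, -C ≤ (∑ s ∈ Finset.range t, F k (x s)) / t := by
    intro t
    rcases Nat.eq_zero_or_pos t with h | h
    · simp [h]; linarith
    · have ht : (0:ℝ) < t := by exact_mod_cast h
      rw [le_div_iff₀ ht]
      calc -C * t = ∑ _s ∈ Finset.range t, (-C) := by
            rw [Finset.sum_const, Finset.card_range]; ring
      _ ≤ _ := Finset.sum_le_sum fun s _ => hFle k (x s)
  have hlimeq : liminf (fun t : ℕ => (∑ s ∈ Finset.range t, F k (x s)) / t) atTop =
      ∫ y, F k y ∂P := (hweak (Fb k)).liminf_eq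
  calc (∫ y, F k y ∂P)
      = liminf (fun t : ℕ => (∑ s ∈ Finset.range t, F k (x s)) / t) atTop := hlimeq.symm
    _ ≤ liminf (fun t : ℕ => (∑ s ∈ Finset.range t, f (x s)) / t) atTop :=
        liminf_le_liminf (Eventually.of_forall hsum)
          (isBoundedUnder_of ⟨-C, hlb⟩) (isCoboundedUnder_ge_of_le atTop hub)

lemma castSucc_ne_last' {m : ℕ} (j : Fin m) : j.castSucc ≠ Fin.last m :=
  (Fin.castSucc_lt_last j).ne

/-- linear part of the chart -/
def linE (m : ℕ) : (Fin m → ℝ) →ₗ[ℝ] (Fin (m+1) → ℝ) where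
  toFun x := fun i => if h : i ≠ Fin.last m then x (i.castPred h) else -∑ j, x j
  map_add' x y := by
    funext i
    rcases eq_or_ne i (Fin.last m) with h | h
    · subst h; simp [Finset.sum_add_distrib]; ring
    · simp [h]
  map_smul' c x := by
    funext i
    rcases eq_or_ne i (Fin.last m) with h | h
    · subst h; simp [Finset.mul_sum]
    · simp [h]

def cE (m : ℕ) : Fin (m+1) → ℝ := fun i => if i ≠ Fin.last m then 0 else 1

/-- the affine chart `ℝᵐ → ℝ^{m+1}` onto the hyperplane `∑ = 1` -/
def emb (m : ℕ) (x : Fin m → ℝ) : Fin (m+1) → ℝ := linE m x + cE m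

def projS (m : ℕ) (p : Fin (m+1) → ℝ) : Fin m → ℝ := fun j => p j.castSucc

lemma linE_apply_castSucc (m : ℕ) (x : Fin m → ℝ) (j : Fin m) :
    linE m x j.castSucc = x j := by
  show (if h : j.castSucc ≠ Fin.last m then x (Fin.castPred _ h) else -∑ j, x j) = x j
  simp [castSucc_ne_last' j]

lemma linE_apply_last (m : ℕ) (x : Fin m → ℝ) :
    linE m x (Fin.last m) = -∑ j, x j := by
  show (if h : Fin.last m ≠ Fin.last m then x (Fin.castPred _ h) else -∑ j, x j) = -∑ j, x j
  simp

lemma emb_apply_castSucc (m : ℕ) (x : Fin m → ℝ) (j : Fin m) :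
    emb m x j.castSucc = x j := by
  simp [emb, linE_apply_castSucc, cE, castSucc_ne_last' j]

lemma emb_apply_last (m : ℕ) (x : Fin m → ℝ) :
    emb m x (Fin.last m) = 1 - ∑ j, x j := by
  simp [emb, linE_apply_last, cE]; ring

lemma emb_proj (m : ℕ) (p : Fin (m+1) → ℝ) (hp : ∑ i, p i = 1) : emb m (projS m p) = p := by
  funext i
  rcases Fin.eq_castSucc_or_eq_last i with ⟨j, rfl⟩ | rfl
  · rw [emb_apply_castSucc]; rfl
  · rw [emb_apply_last]
    rw [Fin.sum_univ_castSucc] at hp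
    show 1 - ∑ j : Fin m, p j.castSucc = p (Fin.last m)
    linarith

lemma proj_emb (m : ℕ) (x : Fin m → ℝ) : projS m (emb m x) = x := by
  funext j
  show emb m x j.castSucc = x j
  rw [emb_apply_castSucc]

lemma sum_emb (m : ℕ) (x : Fin m → ℝ) : ∑ i, emb m x i = 1 := by
  rw [Fin.sum_univ_castSucc, emb_apply_last,
    Finset.sum_congr rfl fun j _ => emb_apply_castSucc m x j]
  ring

lemma emb_add_smul (m : ℕ) (x y : Fin m → ℝ) (c : ℝ) :
    emb m (x + c • y) = emb m x + c • linE m y := by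
  simp only [emb, map_add, LinearMap.map_smul]
  abel

/-- the chart is Lipschitz -/
lemma lip_emb (m : ℕ) : ∃ K : NNReal, LipschitzWith K (emb m) := by
  refine ⟨‖(LinearMap.toContinuousLinearMap (linE m))‖₊, ?_⟩
  have h := (LinearMap.toContinuousLinearMap (linE m)).lipschitz
  refine LipschitzWith.of_dist_le_mul fun x y => ?_
  have heq : dist (emb m x) (emb m y) = dist (linE m x) (linE m y) := by
    simp only [emb]
    rw [dist_add_right]
  rw [heq]
  exact h.dist_le_mul x y

lemma linE_proj (m : ℕ) (d : Fin (m+1) → ℝ) (hd : ∑ i, d i = 0) :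
    linE m (projS m d) = d := by
  funext i
  rcases Fin.eq_castSucc_or_eq_last i with ⟨j, rfl⟩ | rfl
  · rw [linE_apply_castSucc]; rfl
  · rw [linE_apply_last]
    rw [Fin.sum_univ_castSucc] at hd
    show -∑ j : Fin m, d j.castSucc = d (Fin.last m)
    linarith

lemma cont_emb (m : ℕ) : Continuous (emb m) := (lip_emb m).choose_spec.continuous

lemma cont_proj (m : ℕ) : Continuous (projS m) := by
  unfold projS
  exact continuous_pi fun j => continuous_apply _

/-- the chart as an affine map -/
def embA (m : ℕ) : (Fin m → ℝ) →ᵃ[ℝ] (Fin (m+1) → ℝ) :=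
  AffineMap.mk' (emb m) (linE m) 0 (by
    intro p
    simp [emb])

lemma embA_coe (m : ℕ) : ⇑(embA m) = emb m := rfl

/-- a concave function on an open set is differentiable a.e. -/
lemma concave_ae_diff {m : ℕ} {U : Set (Fin m → ℝ)} (hU : IsOpen U) {G : (Fin m → ℝ) → ℝ}
    (hG : ConcaveOn ℝ U G) :
    volume {y | y ∈ U ∧ ¬ DifferentiableAt ℝ G y} = 0 := by
  have hll : LocallyLipschitzOn U G := hG.locallyLipschitzOn hU
  have key : ∀ x ∈ U, ∃ r > 0, Metric.ball x r ⊆ U ∧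
      volume {y | y ∈ Metric.ball x r ∧ ¬ DifferentiableAt ℝ G y} = 0 := by
    intro x hx
    obtain ⟨K, t, ht, hlip⟩ := hll hx
    rw [hU.nhdsWithin_eq hx] at ht
    obtain ⟨r, hr, hball⟩ := Metric.mem_nhds_iff.1 (Filter.inter_mem ht (hU.mem_nhds hx))
    refine ⟨r, hr, fun y hy => (hball hy).2, ?_⟩
    have hlip' : LipschitzOnWith K G (Metric.ball x r) :=
      hlip.mono fun y hy => (hball hy).1
    have hae := hlip'.ae_differentiableWithinAt_of_mem (μ := volume)
    have h0 : volume {y | ¬ (y ∈ Metric.ball x r →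
        DifferentiableWithinAt ℝ G (Metric.ball x r) y)} = 0 := ae_iff.1 hae
    refine measure_mono_null ?_ h0
    rintro y ⟨hy1, hy2⟩
    exact fun hcon => hy2 ((hcon hy1).differentiableAt (Metric.isOpen_ball.mem_nhds hy1))
  choose! r hr hsub hnull using key
  obtain ⟨T, hTc, hTeq⟩ := TopologicalSpace.isOpen_iUnion_countable
    (fun x : U => Metric.ball (x : Fin m → ℝ) (r x)) (fun x => Metric.isOpen_ball)
  refine measure_mono_null ?_ ((measure_biUnion_null_iff hTc).2
    (fun x _ => hnull x x.2))
  rintro y ⟨hyU, hynd⟩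
  have : y ∈ ⋃ x : U, Metric.ball (x : Fin m → ℝ) (r x) :=
    Set.mem_iUnion.2 ⟨⟨y, hyU⟩, Metric.mem_ball_self (hr y hyU)⟩
  rw [← hTeq] at this
  obtain ⟨x, hxT, hyx⟩ := Set.mem_iUnion₂.1 this
  exact Set.mem_biUnion hxT ⟨hyx, hynd⟩

/-- the pair chart -/
def Psi (m : ℕ) (y : (Fin m ⊕ Fin m) → ℝ) : (Fin (m+1) → ℝ) × (Fin (m+1) → ℝ) :=
  (emb m (y ∘ Sum.inl), emb m (y ∘ Sum.inr))

lemma lip_Psi (m : ℕ) : ∃ K : NNReal, LipschitzWith K (Psi m) := by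
  obtain ⟨K, hK⟩ := lip_emb m
  have h1 : LipschitzWith 1 (fun y : (Fin m ⊕ Fin m) → ℝ => y ∘ Sum.inl) := by
    refine LipschitzWith.of_dist_le_mul fun y z => ?_
    rw [NNReal.coe_one, one_mul]
    refine (dist_pi_le_iff dist_nonneg).2 fun i => dist_le_pi_dist y z (Sum.inl i)
  have h2 : LipschitzWith 1 (fun y : (Fin m ⊕ Fin m) → ℝ => y ∘ Sum.inr) := by
    refine LipschitzWith.of_dist_le_mul fun y z => ?_
    rw [NNReal.coe_one, one_mul]
    refine (dist_pi_le_iff dist_nonneg).2 fun i => dist_le_pi_dist y z (Sum.inr i)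
  exact ⟨max (K * 1) (K * 1), (hK.comp h1).prodMk (hK.comp h2)⟩

/-- image under the pair chart of a cylinder over a null set is Hausdorff-null -/
lemma hausdorff_null_image (m : ℕ) {N : Set (Fin m → ℝ)} (hN : volume N = 0) :
    μH[((Fintype.card (Fin m ⊕ Fin m) : ℕ) : ℝ)]
      (Psi m '' {y | (y ∘ Sum.inl) ∈ N}) = 0 := by
  obtain ⟨N', hNN', hN'm, hN'0⟩ := exists_measurable_superset_of_null hN
  obtain ⟨K, hK⟩ := lip_Psi m
  have hsub : Psi m '' {y | (y ∘ Sum.inl) ∈ N} ⊆ Psi m '' {y | (y ∘ Sum.inl) ∈ N'} :=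
    Set.image_mono fun y hy => hNN' hy
  refine measure_mono_null hsub ?_
  have hle := hK.hausdorffMeasure_image_le
    (d := ((Fintype.card (Fin m ⊕ Fin m) : ℕ) : ℝ)) (by positivity)
    {y | (y ∘ Sum.inl) ∈ N'}
  refine le_antisymm (hle.trans ?_) (zero_le)
  have hvol : μH[((Fintype.card (Fin m ⊕ Fin m) : ℕ) : ℝ)]
      {y : (Fin m ⊕ Fin m) → ℝ | (y ∘ Sum.inl) ∈ N'} = 0 := by
    rw [MeasureTheory.hausdorffMeasure_pi_real]
    have hmp := MeasureTheory.volume_measurePreserving_sumPiEquivProdPi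
      (fun _ : Fin m ⊕ Fin m => ℝ)
    have heq : {y : (Fin m ⊕ Fin m) → ℝ | (y ∘ Sum.inl) ∈ N'} =
        (MeasurableEquiv.sumPiEquivProdPi (fun _ : Fin m ⊕ Fin m => ℝ)) ⁻¹'
          (N' ×ˢ Set.univ) := by
      ext y
      simp [MeasurableEquiv.sumPiEquivProdPi, Equiv.sumPiEquivProdPi, Set.mem_prod]
      rfl
    rw [heq, hmp.measure_preimage ((hN'm.prod MeasurableSet.univ).nullMeasurableSet)]
    rw [Measure.volume_eq_prod, Measure.prod_prod, hN'0, zero_mul]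
  rw [hvol, mul_zero]

/-! ### Main theorem -/

section Main

-- local semicontinuity helper lemmas
variable {Y : Type*} [TopologicalSpace Y]

lemma usc_log' {h : Y → ℝ} (hh : UpperSemicontinuous h) (hpos : ∀ x, 0 < h x) :
    UpperSemicontinuous (fun x => Real.log (h x)) := by
  intro x c hc
  have h1 : h x < Real.exp c := (Real.log_lt_iff_lt_exp (hpos x)).1 hc
  filter_upwards [hh x _ h1] with y hy
  exact (Real.log_lt_iff_lt_exp (hpos y)).2 hy

lemma lsc_log' {h : Y → ℝ} (hh : LowerSemicontinuous h) (hpos : ∀ x, 0 < h x) :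
    LowerSemicontinuous (fun x => Real.log (h x)) := by
  intro x c hc
  have h1 : Real.exp c < h x := (Real.lt_log_iff_exp_lt (hpos x)).1 hc
  filter_upwards [hh x _ h1] with y hy
  exact (Real.lt_log_iff_exp_lt (lt_trans (Real.exp_pos c) hy)).2 hy

lemma usc_min' {h g : Y → ℝ} (hh : UpperSemicontinuous h) (hg : Continuous g) :
    UpperSemicontinuous (fun x => min (h x) (g x)) := by
  intro x c hc
  rcases min_lt_iff.1 hc with h1 | h1
  · filter_upwards [hh x c h1] with y hy using lt_of_le_of_lt (min_le_left _ _) hy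
  · filter_upwards [(isOpen_lt hg continuous_const).mem_nhds h1] with y hy
    exact lt_of_le_of_lt (min_le_right _ _) hy

lemma usc_max' {h g : Y → ℝ} (hh : UpperSemicontinuous h) (hg : Continuous g) :
    UpperSemicontinuous (fun x => max (h x) (g x)) := by
  intro x c hc
  rw [max_lt_iff] at hc
  filter_upwards [hh x c hc.1, (isOpen_lt hg continuous_const).mem_nhds hc.2] with y hy1 hy2
  exact max_lt hy1 hy2

lemma lsc_min' {h g : Y → ℝ} (hh : LowerSemicontinuous h) (hg : Continuous g) :
    LowerSemicontinuous (fun x => min (h x) (g x)) := by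
  intro x c hc
  simp only [gt_iff_lt, lt_min_iff] at hc
  filter_upwards [hh x c hc.1, (isOpen_lt continuous_const hg).mem_nhds hc.2] with y hy1 hy2
  exact lt_min hy1 hy2

lemma lsc_max' {h g : Y → ℝ} (hh : LowerSemicontinuous h) (hg : Continuous g) :
    LowerSemicontinuous (fun x => max (h x) (g x)) := by
  intro x c hc
  rcases lt_max_iff.1 hc with h1 | h1
  · filter_upwards [hh x c h1] with y hy using lt_of_lt_of_le hy (le_max_left _ _)
  · filter_upwards [(isOpen_lt continuous_const hg).mem_nhds h1] with y hy
    exact lt_of_lt_of_le hy (le_max_right _ _)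

lemma usc_addc' {g h : Y → ℝ} (hg : Continuous g) (hh : UpperSemicontinuous h) :
    UpperSemicontinuous (fun x => g x + h x) :=
  hg.upperSemicontinuous.add hh

lemma lsc_addc' {g h : Y → ℝ} (hg : Continuous g) (hh : LowerSemicontinuous h) :
    LowerSemicontinuous (fun x => g x + h x) :=
  hg.lowerSemicontinuous.add hh

end Main

/-- The compact set `S = {(p,q) ∈ Δₙ × Δₙ : 1/M ≤ qᵢ/pᵢ ≤ M ∀ i}`. -/
def Sset (n : ℕ) (M : ℝ) : Set ((Fin n → ℝ) × (Fin n → ℝ)) :=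
  {pq | pq.1 ∈ oS n ∧ pq.2 ∈ oS n ∧ ∀ i, 1 / M ≤ pq.2 i / pq.1 i ∧ pq.2 i / pq.1 i ≤ M}

/-- The function `ℓ_π(p,q) = log(π(p)·(q/p))`, viewed as a function on `S`. -/
def lS {n : ℕ} {M : ℝ} (π : ↥(oS n) → ↥(cS n)) (x : ↥(Sset n M)) : ℝ :=
  Real.log (∑ i, (π ⟨x.1.1, x.2.1⟩ : Fin n → ℝ) i * (x.1.2 i / x.1.1 i))

/-- The empirical measure `ℙ_t = (1/t) Σ_{s<t} δ_{(μ(s),μ(s+1))}` as a measure on `S`. -/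
def empS {n : ℕ} {M : ℝ} (μ : ℕ → ↥(oS n))
    (hS : ∀ s : ℕ, ((μ s : Fin n → ℝ), (μ (s + 1) : Fin n → ℝ)) ∈ Sset n M) (t : ℕ) :
    Measure ↥(Sset n M) :=
  (t : ℝ≥0∞)⁻¹ • ∑ s ∈ Finset.range t,
    Measure.dirac (⟨((μ s : Fin n → ℝ), (μ (s + 1) : Fin n → ℝ)), hS s⟩ : ↥(Sset n M))

set_option maxHeartbeats 2000000

/-- Lemma 4.8: under weak convergence of the empirical measures `ℙ_t` to an
absolutely continuous probability measure `ℙ` on `S`, the asymptotic growth rate of every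
functionally generated portfolio exists and `W(π) = lim (1/t) log V_π(t)
= lim ∫_S ℓ_π dℙ_t = ∫_S ℓ_π dℙ`. -/
theorem stmt19 {n : ℕ} (hn : 2 ≤ n) (M : ℝ) (hM : 0 < M)
    (μ : ℕ → ↥(oS n))
    (hS : ∀ s : ℕ, ((μ s : Fin n → ℝ), (μ (s + 1) : Fin n → ℝ)) ∈ Sset n M)
    (P : Measure ↥(Sset n M)) [IsProbabilityMeasure P]
    (habs : P.map Subtype.val ≪ Measure.hausdorffMeasure (2 * (n : ℝ) - 2))
    (hweak : ∀ f : BoundedContinuousFunction ↥(Sset n M) ℝ,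
      Tendsto (fun t : ℕ =>
          (∑ s ∈ Finset.range t,
            f ⟨((μ s : Fin n → ℝ), (μ (s + 1) : Fin n → ℝ)), hS s⟩) / t)
        atTop (𝓝 (∫ x, f x ∂P))) :
    ∀ π : ↥(oS n) → ↥(cS n), IsFG π →
      Tendsto (fun t : ℕ => Real.log (pV μ π t) / t) atTop (𝓝 (∫ x, lS π x ∂P)) ∧
      Tendsto (fun t : ℕ => ∫ x, lS π x ∂(empS μ hS t)) atTop (𝓝 (∫ x, lS π x ∂P)) := by
  obtain ⟨m, rfl⟩ : ∃ m, n = m + 1 := ⟨n - 1, by omega⟩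
  intro π hπ
  obtain ⟨Φ, hΦpos, hΦconc, hΦfg⟩ := hπ
  set X : ℕ → ↥(Sset (m+1) M) := fun s =>
    ⟨((μ s : Fin (m+1) → ℝ), (μ (s+1) : Fin (m+1) → ℝ)), hS s⟩ with hXdef
  haveI : Nonempty ↥(Sset (m+1) M) := ⟨X 0⟩
  -- shorthand for coordinates of points of S
  set Pp : ↥(Sset (m+1) M) → Fin (m+1) → ℝ := fun x => x.1.1 with hPpdef
  set Qq : ↥(Sset (m+1) M) → Fin (m+1) → ℝ := fun x => x.1.2 with hQqdef
  have hPmem : ∀ x, Pp x ∈ oS (m+1) := fun x => x.2.1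
  have hQmem : ∀ x, Qq x ∈ oS (m+1) := fun x => x.2.2.1
  have hratio : ∀ x i, 1/M ≤ Qq x i / Pp x i ∧ Qq x i / Pp x i ≤ M := fun x => x.2.2.2
  have hcontP : Continuous Pp := continuous_fst.comp continuous_subtype_val
  have hcontQ : Continuous Qq := continuous_snd.comp continuous_subtype_val
  -- M ≥ 1
  have hM1 : (1:ℝ) ≤ M := by
    by_contra hcon
    push_neg at hcon
    have hlt : ∀ i, Qq (X 0) i < Pp (X 0) i := by
      intro i
      have h1 := (hratio (X 0) i).2
      have hpi := (hPmem (X 0)).1 i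
      rw [div_le_iff₀ hpi] at h1
      calc Qq (X 0) i ≤ M * Pp (X 0) i := h1
        _ < 1 * Pp (X 0) i := mul_lt_mul_of_pos_right hcon hpi
        _ = Pp (X 0) i := one_mul _
    have hsum := Finset.sum_lt_sum_of_nonempty Finset.univ_nonempty
      (fun i _ => hlt i)
    rw [(hQmem (X 0)).2, (hPmem (X 0)).2] at hsum
    exact lt_irrefl _ hsum
  have hlogM0 : 0 ≤ Real.log M := Real.log_nonneg hM1
  -- the chart domain and composed potential
  set U : Set (Fin m → ℝ) := {x | ∀ i, 0 < emb m x i} with hUdef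
  have hUopen : IsOpen U := by
    have heq : U = ⋂ i, (fun x => emb m x i) ⁻¹' Set.Ioi 0 := by
      ext x; simp [hUdef, Set.mem_iInter]
    rw [heq]
    exact isOpen_iInter_of_finite fun i =>
      isOpen_Ioi.preimage ((continuous_apply i).comp (cont_emb m))
  have hUmem : ∀ x, x ∈ U ↔ emb m x ∈ oS (m+1) :=
    fun x => ⟨fun h => ⟨h, sum_emb m x⟩, fun h => h.1⟩
  set G : (Fin m → ℝ) → ℝ := Φ ∘ emb m with hGdef
  have hGconc : ConcaveOn ℝ U G := by
    have h1 := hΦconc.comp_affineMap (embA m)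
    have hseteq : (⇑(embA m) ⁻¹' oS (m+1)) = U := by
      ext x
      rw [embA_coe]
      exact (hUmem x).symm
    rw [hseteq] at h1
    exact h1
  have hGcont : ContinuousOn G U := hGconc.continuousOn hUopen
  have hprojU : ∀ p, p ∈ oS (m+1) → projS m p ∈ U := by
    intro p hp i
    rw [emb_proj m p hp.2]
    exact hp.1 i
  have hΦG : ∀ p ∈ oS (m+1), Φ p = G (projS m p) := by
    intro p hp
    show Φ p = Φ (emb m (projS m p))
    rw [emb_proj m p hp.2]
  have hcontG : ∀ f : ↥(Sset (m+1) M) → Fin m → ℝ, Continuous f → (∀ x, f x ∈ U) →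
      Continuous fun x => G (f x) := by
    intro f hf hmemf
    rw [continuous_iff_continuousAt]
    intro x
    exact (hGcont.continuousAt (hUopen.mem_nhds (hmemf x))).comp hf.continuousAt
  have hcontΦp : Continuous (fun x => Φ (Pp x)) := by
    have heq : (fun x => Φ (Pp x)) = fun x => G (projS m (Pp x)) :=
      funext fun x => hΦG _ (hPmem x)
    rw [heq]
    exact hcontG _ ((cont_proj m).comp hcontP) fun x => hprojU _ (hPmem x)
  have hΦppos : ∀ x, 0 < Φ (Pp x) := fun x => hΦpos _ (hPmem x)
  -- step sizes
  set tk : ℕ → ℝ := fun k => ((M + 1) * (k + 1))⁻¹ with htkdef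
  have hM1pos : (0:ℝ) < M + 1 := by linarith
  have htk_pos : ∀ k, 0 < tk k := by
    intro k
    have : (0:ℝ) < (M + 1) * (k + 1) := by positivity
    exact inv_pos.2 this
  have htk_le : ∀ k, tk k ≤ (M + 1)⁻¹ := by
    intro k
    apply inv_anti₀ hM1pos
    nlinarith [Nat.cast_nonneg (α := ℝ) k]
  have htk_lt1 : ∀ k, tk k < 1 := by
    intro k
    have h2 : (M+1)⁻¹ < 1 := by
      rw [inv_lt_one_iff₀]
      right; linarith
    exact lt_of_le_of_lt (htk_le k) h2
  have htk_M : ∀ k, tk k * (M - 1) < 1 := by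
    intro k
    have h1 : tk k * (M - 1) ≤ (M+1)⁻¹ * (M - 1) := by
      apply mul_le_mul_of_nonneg_right (htk_le k) (by linarith)
    have h2 : (M+1)⁻¹ * (M - 1) < 1 := by
      rw [inv_mul_lt_iff₀ hM1pos]
      linarith
    linarith
  -- the difference vector
  set dvec : ↥(Sset (m+1) M) → Fin (m+1) → ℝ := fun x => Qq x - Pp x with hdvecdef
  have hq_le : ∀ x i, Qq x i ≤ M * Pp x i := by
    intro x i
    have h1 := (hratio x i).2
    rwa [div_le_iff₀ ((hPmem x).1 i)] at h1
  have hmem_fwd : ∀ x k, Pp x + tk k • dvec x ∈ oS (m+1) := by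
    intro x k
    constructor
    · intro i
      have hp := (hPmem x).1 i
      have hq := (hQmem x).1 i
      show 0 < Pp x i + tk k * (Qq x i - Pp x i)
      nlinarith [htk_pos k, htk_lt1 k]
    · have hsp := (hPmem x).2
      have hsq := (hQmem x).2
      show ∑ i, (Pp x i + tk k * (Qq x i - Pp x i)) = 1
      rw [Finset.sum_add_distrib, ← Finset.mul_sum, Finset.sum_sub_distrib, hsp, hsq]
      ring
  have hmem_bwd : ∀ x k, Pp x - tk k • dvec x ∈ oS (m+1) := by
    intro x k
    constructor
    · intro i
      have hp := (hPmem x).1 i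
      have hqM := hq_le x i
      show 0 < Pp x i - tk k * (Qq x i - Pp x i)
      have h2 : tk k * (Qq x i - Pp x i) ≤ tk k * ((M - 1) * Pp x i) := by
        apply mul_le_mul_of_nonneg_left _ (htk_pos k).le
        nlinarith
      nlinarith [htk_M k, htk_pos k]
    · have hsp := (hPmem x).2
      have hsq := (hQmem x).2
      show ∑ i, (Pp x i - tk k * (Qq x i - Pp x i)) = 1
      rw [Finset.sum_sub_distrib, ← Finset.mul_sum, Finset.sum_sub_distrib, hsp, hsq]
      ring
  -- the portfolio return function
  set vf : ↥(Sset (m+1) M) → ℝ := fun x =>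
    ∑ i, (π ⟨Pp x, hPmem x⟩ : Fin (m+1) → ℝ) i * (Qq x i / Pp x i) with hvfdef
  have hlSvf : ∀ x, lS π x = Real.log (vf x) := fun x => rfl
  have hπmem : ∀ x, (π ⟨Pp x, hPmem x⟩ : Fin (m+1) → ℝ) ∈ cS (m+1) :=
    fun x => (π ⟨Pp x, hPmem x⟩).2
  have hvf_lb : ∀ x, 1/M ≤ vf x := by
    intro x
    have hw := hπmem x
    calc 1/M = ∑ i, (π ⟨Pp x, hPmem x⟩ : Fin (m+1) → ℝ) i * (1/M) := by
          rw [← Finset.sum_mul, hw.2, one_mul]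
      _ ≤ vf x := Finset.sum_le_sum fun i _ =>
          mul_le_mul_of_nonneg_left (hratio x i).1 (hw.1 i)
  have hvf_ub : ∀ x, vf x ≤ M := by
    intro x
    have hw := hπmem x
    calc vf x ≤ ∑ i, (π ⟨Pp x, hPmem x⟩ : Fin (m+1) → ℝ) i * M :=
          Finset.sum_le_sum fun i _ =>
            mul_le_mul_of_nonneg_left (hratio x i).2 (hw.1 i)
      _ = M := by rw [← Finset.sum_mul, hw.2, one_mul]
  have hvf_pos : ∀ x, 0 < vf x := fun x => lt_of_lt_of_le (by positivity) (hvf_lb x)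
  -- the supporting affine bound
  have hAff : ∀ (x : ↥(Sset (m+1) M)) (c : ℝ), Pp x + c • dvec x ∈ oS (m+1) →
      Φ (Pp x + c • dvec x) ≤ Φ (Pp x) * (1 + c * (vf x - 1)) := by
    intro x c hmem
    have hfg := hΦfg ⟨Pp x, hPmem x⟩ ⟨_, hmem⟩
    have hsum : ∑ i, (π ⟨Pp x, hPmem x⟩ : Fin (m+1) → ℝ) i *
        ((Pp x + c • dvec x) i / Pp x i) = 1 + c * (vf x - 1) := by
      have hterm : ∀ i, (Pp x + c • dvec x) i / Pp x i =
          1 + c * (Qq x i / Pp x i) - c := by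
        intro i
        have hpi := (hPmem x).1 i
        show (Pp x i + c * (Qq x i - Pp x i)) / Pp x i = _
        field_simp
        ring
      have hw := hπmem x
      calc ∑ i, (π ⟨Pp x, hPmem x⟩ : Fin (m+1) → ℝ) i * ((Pp x + c • dvec x) i / Pp x i)
          = ∑ i, ((π ⟨Pp x, hPmem x⟩ : Fin (m+1) → ℝ) i * 1 +
            c * ((π ⟨Pp x, hPmem x⟩ : Fin (m+1) → ℝ) i * (Qq x i / Pp x i)) -
            c * (π ⟨Pp x, hPmem x⟩ : Fin (m+1) → ℝ) i) := by
            refine Finset.sum_congr rfl fun i _ => ?_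
            rw [hterm i]
            ring
        _ = 1 + c * (vf x - 1) := by
            rw [Finset.sum_sub_distrib, Finset.sum_add_distrib, ← Finset.mul_sum,
              ← Finset.mul_sum]
            simp only [mul_one]
            rw [hw.2]
            have hvfx : ∑ i, (π ⟨Pp x, hPmem x⟩ : Fin (m+1) → ℝ) i * (Qq x i / Pp x i) = vf x := rfl
            rw [hvfx]
            ring
    have hΦp := hΦppos x
    rw [div_le_iff₀ hΦp] at hfg
    calc Φ (Pp x + c • dvec x) ≤ (∑ i, (π ⟨Pp x, hPmem x⟩ : Fin (m+1) → ℝ) i *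
          ((Pp x + c • dvec x) i / Pp x i)) * Φ (Pp x) := hfg
      _ = Φ (Pp x) * (1 + c * (vf x - 1)) := by rw [hsum]; ring
  -- slope functions
  set σf : ℕ → ↥(Sset (m+1) M) → ℝ := fun k x =>
    (Φ (Pp x + tk k • dvec x) - Φ (Pp x)) / tk k with hσdef
  set ρf : ℕ → ↥(Sset (m+1) M) → ℝ := fun k x =>
    (Φ (Pp x) - Φ (Pp x - tk k • dvec x)) / tk k with hρdef
  have hσ_le : ∀ k x, σf k x ≤ Φ (Pp x) * (vf x - 1) := by
    intro k x
    have h := hAff x (tk k) (hmem_fwd x k)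
    show (Φ (Pp x + tk k • dvec x) - Φ (Pp x)) / tk k ≤ _
    rw [div_le_iff₀ (htk_pos k)]
    nlinarith [h]
  have hρ_ge : ∀ k x, Φ (Pp x) * (vf x - 1) ≤ ρf k x := by
    intro k x
    have hmem' : Pp x + (-tk k) • dvec x ∈ oS (m+1) := by
      rw [neg_smul, ← sub_eq_add_neg]
      exact hmem_bwd x k
    have h := hAff x (-tk k) hmem'
    rw [neg_smul, ← sub_eq_add_neg] at h
    show _ ≤ (Φ (Pp x) - Φ (Pp x - tk k • dvec x)) / tk k
    rw [le_div_iff₀ (htk_pos k)]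
    nlinarith [h]
  set uf : ↥(Sset (m+1) M) → ℝ := fun x => ⨅ k, ρf k x with hufdef
  set wf : ↥(Sset (m+1) M) → ℝ := fun x => ⨆ k, σf k x with hwfdef
  have hρbdd : ∀ x, BddBelow (Set.range fun k => ρf k x) := by
    intro x
    refine ⟨Φ (Pp x) * (vf x - 1), ?_⟩
    rintro _ ⟨k, rfl⟩
    exact hρ_ge k x
  have hσbdd : ∀ x, BddAbove (Set.range fun k => σf k x) := by
    intro x
    refine ⟨Φ (Pp x) * (vf x - 1), ?_⟩
    rintro _ ⟨k, rfl⟩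
    exact hσ_le k x
  have huf_ge : ∀ x, Φ (Pp x) * (vf x - 1) ≤ uf x := fun x => le_ciInf fun k => hρ_ge k x
  have hwf_le : ∀ x, wf x ≤ Φ (Pp x) * (vf x - 1) := fun x => ciSup_le fun k => hσ_le k x
  -- continuity of slopes
  have hcontΦfwd : ∀ k, Continuous fun x => Φ (Pp x + tk k • dvec x) := by
    intro k
    have heq : (fun x => Φ (Pp x + tk k • dvec x)) =
        fun x => G (projS m (Pp x + tk k • dvec x)) :=
      funext fun x => hΦG _ (hmem_fwd x k)
    rw [heq]
    refine hcontG _ ((cont_proj m).comp ?_) fun x => hprojU _ (hmem_fwd x k)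
    exact hcontP.add ((hcontQ.sub hcontP).const_smul (tk k))
  have hcontΦbwd : ∀ k, Continuous fun x => Φ (Pp x - tk k • dvec x) := by
    intro k
    have heq : (fun x => Φ (Pp x - tk k • dvec x)) =
        fun x => G (projS m (Pp x - tk k • dvec x)) :=
      funext fun x => hΦG _ (hmem_bwd x k)
    rw [heq]
    refine hcontG _ ((cont_proj m).comp ?_) fun x => hprojU _ (hmem_bwd x k)
    exact hcontP.sub ((hcontQ.sub hcontP).const_smul (tk k))
  have hcontσ : ∀ k, Continuous (σf k) := fun k =>
    ((hcontΦfwd k).sub hcontΦp).div_const _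
  have hcontρ : ∀ k, Continuous (ρf k) := fun k =>
    (hcontΦp.sub (hcontΦbwd k)).div_const _
  -- semicontinuity of the envelopes
  have husc_uf : UpperSemicontinuous uf := by
    intro x c hc
    obtain ⟨k, hk⟩ := exists_lt_of_ciInf_lt hc
    filter_upwards [(isOpen_lt (hcontρ k) continuous_const).mem_nhds hk] with y hy
    exact lt_of_le_of_lt (ciInf_le (hρbdd y) k) hy
  have hlsc_wf : LowerSemicontinuous wf := by
    intro x c hc
    obtain ⟨k, hk⟩ := exists_lt_of_lt_ciSup hc
    filter_upwards [(isOpen_lt continuous_const (hcontσ k)).mem_nhds hk] with y hy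
    exact lt_of_lt_of_le hy (le_ciSup (hσbdd y) k)
  -- clamped value functions
  set Au : ↥(Sset (m+1) M) → ℝ := fun x =>
    max (min (Φ (Pp x) + uf x) (M * Φ (Pp x))) (Φ (Pp x) / M) with hAudef
  set Aw : ↥(Sset (m+1) M) → ℝ := fun x =>
    min (max (Φ (Pp x) + wf x) (Φ (Pp x) / M)) (M * Φ (Pp x)) with hAwdef
  set Fu : ↥(Sset (m+1) M) → ℝ := fun x =>
    Real.log (Au x) - Real.log (Φ (Pp x)) with hFudef
  set Fw : ↥(Sset (m+1) M) → ℝ := fun x =>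
    Real.log (Aw x) - Real.log (Φ (Pp x)) with hFwdef
  have hΦv : ∀ x, Φ (Pp x) + Φ (Pp x) * (vf x - 1) = Φ (Pp x) * vf x := fun x => by ring
  have hΦvM : ∀ x, Φ (Pp x) * vf x ≤ M * Φ (Pp x) := by
    intro x
    have := hΦppos x
    nlinarith [hvf_ub x]
  have hΦvm : ∀ x, Φ (Pp x) / M ≤ Φ (Pp x) * vf x := by
    intro x
    have h1 := hΦppos x
    have h2 := hvf_lb x
    rw [div_le_iff₀ hM]
    have h3 : Φ (Pp x) * (1/M) * M = Φ (Pp x) := by field_simp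
    have h4 := mul_le_mul_of_nonneg_right (mul_le_mul_of_nonneg_left h2 h1.le) hM.le
    linarith
  have hmM : ∀ x, Φ (Pp x) / M ≤ M * Φ (Pp x) := by
    intro x
    have h1 := hΦppos x
    rw [div_le_iff₀ hM]
    have h2 : (1:ℝ) ≤ M * M := by nlinarith
    nlinarith
  have hAu_ge : ∀ x, Φ (Pp x) * vf x ≤ Au x := by
    intro x
    refine le_max_of_le_left (le_min ?_ (hΦvM x))
    rw [← hΦv x]
    linarith [huf_ge x]
  have hAu_le : ∀ x, Au x ≤ M * Φ (Pp x) := fun x =>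
    max_le (min_le_right _ _) (hmM x)
  have hAu_pos : ∀ x, 0 < Au x := fun x =>
    lt_of_lt_of_le (div_pos (hΦppos x) hM) (le_max_right _ _)
  have hAw_le : ∀ x, Aw x ≤ Φ (Pp x) * vf x := by
    intro x
    refine min_le_of_left_le (max_le ?_ (hΦvm x))
    rw [← hΦv x]
    linarith [hwf_le x]
  have hAw_ge : ∀ x, Φ (Pp x) / M ≤ Aw x := fun x =>
    le_min (le_max_of_le_right le_rfl) (hmM x)
  have hAw_pos : ∀ x, 0 < Aw x := fun x =>
    lt_of_lt_of_le (div_pos (hΦppos x) hM) (hAw_ge x)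
  have hΦvf_pos : ∀ x, 0 < Φ (Pp x) * vf x := fun x => mul_pos (hΦppos x) (hvf_pos x)
  have hlogsplit : ∀ x, Real.log (Φ (Pp x) * vf x) - Real.log (Φ (Pp x)) =
      Real.log (vf x) := by
    intro x
    rw [Real.log_mul (hΦppos x).ne' (hvf_pos x).ne']
    ring
  have hFu_ge : ∀ x : ↥(Sset (m+1) M), lS π x ≤ Fu x := by
    intro x
    rw [hlSvf x, ← hlogsplit x]
    exact sub_le_sub_right (Real.log_le_log (hΦvf_pos x) (hAu_ge x)) _
  have hFw_le : ∀ x : ↥(Sset (m+1) M), Fw x ≤ lS π x := by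
    intro x
    rw [hlSvf x, ← hlogsplit x]
    exact sub_le_sub_right (Real.log_le_log (hAw_pos x) (hAw_le x)) _
  have hlS_lb : ∀ x : ↥(Sset (m+1) M), -Real.log M ≤ lS π x := by
    intro x
    rw [hlSvf x, ← Real.log_inv]
    apply Real.log_le_log (inv_pos.2 hM)
    rw [inv_eq_one_div]
    exact hvf_lb x
  have hlS_ub : ∀ x : ↥(Sset (m+1) M), lS π x ≤ Real.log M := by
    intro x
    rw [hlSvf x]
    exact Real.log_le_log (hvf_pos x) (hvf_ub x)
  have hFu_ub : ∀ x, Fu x ≤ Real.log M := by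
    intro x
    have h1 : Real.log (Au x) ≤ Real.log M + Real.log (Φ (Pp x)) := by
      rw [← Real.log_mul hM.ne' (hΦppos x).ne']
      exact Real.log_le_log (hAu_pos x) (hAu_le x)
    show Real.log (Au x) - Real.log (Φ (Pp x)) ≤ Real.log M
    linarith
  have hFw_lb : ∀ x, -Real.log M ≤ Fw x := by
    intro x
    have h1 : Real.log (Φ (Pp x)) - Real.log M ≤ Real.log (Aw x) := by
      rw [← Real.log_div (hΦppos x).ne' hM.ne']
      exact Real.log_le_log (div_pos (hΦppos x) hM) (hAw_ge x)
    show -Real.log M ≤ Real.log (Aw x) - Real.log (Φ (Pp x))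
    linarith
  have hFu_abs : ∀ x, |Fu x| ≤ Real.log M := fun x =>
    abs_le.2 ⟨le_trans (hlS_lb x) (hFu_ge x), hFu_ub x⟩
  have hFw_abs : ∀ x, |Fw x| ≤ Real.log M := fun x =>
    abs_le.2 ⟨hFw_lb x, le_trans (hFw_le x) (hlS_ub x)⟩
  -- semicontinuity of Fu, Fw
  have husc_Fu : UpperSemicontinuous Fu := by
    have h1 : UpperSemicontinuous Au := by
      apply usc_max' (usc_min' ?_ (continuous_const.mul hcontΦp)) (hcontΦp.div_const M)
      exact usc_addc' hcontΦp husc_uf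
    have h2 : Continuous fun x => -Real.log (Φ (Pp x)) :=
      (hcontΦp.log fun x => (hΦppos x).ne').neg
    have heq : Fu = fun x => (-Real.log (Φ (Pp x))) + Real.log (Au x) :=
      funext fun x => by show Real.log (Au x) - Real.log (Φ (Pp x)) = _; ring
    rw [heq]
    exact usc_addc' h2 (usc_log' h1 hAu_pos)
  have hlsc_Fw : LowerSemicontinuous Fw := by
    have h1 : LowerSemicontinuous Aw := by
      apply lsc_min' (lsc_max' ?_ (hcontΦp.div_const M)) (continuous_const.mul hcontΦp)
      exact lsc_addc' hcontΦp hlsc_wf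
    have h2 : Continuous fun x => -Real.log (Φ (Pp x)) :=
      (hcontΦp.log fun x => (hΦppos x).ne').neg
    have heq : Fw = fun x => (-Real.log (Φ (Pp x))) + Real.log (Aw x) :=
      funext fun x => by show Real.log (Aw x) - Real.log (Φ (Pp x)) = _; ring
    rw [heq]
    exact lsc_addc' h2 (lsc_log' h1 hAw_pos)
  -- collapse of envelopes at differentiability points
  have hsum_dvec : ∀ x, ∑ i, dvec x i = 0 := by
    intro x
    show ∑ i, (Qq x i - Pp x i) = 0
    rw [Finset.sum_sub_distrib, (hQmem x).2, (hPmem x).2]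
    ring
  have htk0 : Tendsto tk atTop (𝓝 0) := by
    have hA : Tendsto (fun k : ℕ => (M + 1) * ((k:ℝ) + 1)) atTop atTop := by
      apply Tendsto.const_mul_atTop hM1pos
      exact tendsto_atTop_add_const_right atTop 1 tendsto_natCast_atTop_atTop
    exact hA.inv_tendsto_atTop
  have htk0' : Tendsto tk atTop (𝓝[≠] (0:ℝ)) := by
    apply tendsto_nhdsWithin_of_tendsto_nhds_of_eventually_within _ htk0
    exact Eventually.of_forall fun k => (htk_pos k).ne'
  have hmtk0' : Tendsto (fun k => -tk k) atTop (𝓝[≠] (0:ℝ)) := by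
    apply tendsto_nhdsWithin_of_tendsto_nhds_of_eventually_within
    · simpa using htk0.neg
    · exact Eventually.of_forall fun k => neg_ne_zero.2 (htk_pos k).ne'
  have hcollapse : ∀ x : ↥(Sset (m+1) M), DifferentiableAt ℝ G (projS m (Pp x)) →
      uf x = Φ (Pp x) * (vf x - 1) ∧ wf x = Φ (Pp x) * (vf x - 1) := by
    intro x hdiff
    set a := projS m (Pp x) with hadef
    set b := projS m (dvec x) with hbdef
    have hlb : linE m b = dvec x := linE_proj m _ (hsum_dvec x)
    have hpa : emb m a = Pp x := emb_proj m _ (hPmem x).2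
    have hcurve : ∀ c : ℝ, Pp x + c • dvec x = emb m (a + c • b) := by
      intro c
      rw [emb_add_smul, hpa, hlb]
    have hphit : ∀ c : ℝ, G (a + c • b) = Φ (Pp x + c • dvec x) := by
      intro c
      show Φ (emb m (a + c • b)) = _
      rw [← hcurve]
    have hphi0 : G (a + (0:ℝ) • b) = Φ (Pp x) := by
      rw [zero_smul, add_zero]
      show Φ (emb m a) = _
      rw [hpa]
    have hderiv : HasDerivAt (fun c : ℝ => G (a + c • b)) (fderiv ℝ G a b) 0 := by
      have h1 : HasDerivAt (fun c : ℝ => a + c • b) b 0 := by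
        simpa using ((hasDerivAt_id (0:ℝ)).smul_const b).const_add a
      have h0 : a + (0:ℝ) • b = a := by rw [zero_smul, add_zero]
      have h2' : HasFDerivAt G (fderiv ℝ G a) (a + (0:ℝ) • b) := by
        rw [h0]; exact hdiff.hasFDerivAt
      have h2 := h2'.comp_hasDerivAt 0 h1
      exact h2
    set D := fderiv ℝ G a b with hDdef
    have hslope := hasDerivAt_iff_tendsto_slope.1 hderiv
    have hσtendsto : Tendsto (fun k => σf k x) atTop (𝓝 D) := by
      refine (hslope.comp htk0').congr fun k => ?_
      show slope (fun c : ℝ => G (a + c • b)) 0 (tk k) = σf k x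
      rw [slope_def_field]
      show (G (a + tk k • b) - G (a + (0:ℝ) • b)) / (tk k - 0) = _
      rw [hphit, hphi0, sub_zero]
    have hρtendsto : Tendsto (fun k => ρf k x) atTop (𝓝 D) := by
      refine (hslope.comp hmtk0').congr fun k => ?_
      show slope (fun c : ℝ => G (a + c • b)) 0 (-tk k) = ρf k x
      rw [slope_def_field]
      show (G (a + (-tk k) • b) - G (a + (0:ℝ) • b)) / (-tk k - 0) = _
      rw [hphit, hphi0]
      rw [neg_smul, ← sub_eq_add_neg]
      show (Φ (Pp x - tk k • dvec x) - Φ (Pp x)) / (-tk k - 0) =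
        (Φ (Pp x) - Φ (Pp x - tk k • dvec x)) / tk k
      rw [sub_zero, div_neg, ← neg_div, neg_sub]
    have h1 : uf x ≤ D := ge_of_tendsto' hρtendsto fun k => ciInf_le (hρbdd x) k
    have h2 : D ≤ wf x := le_of_tendsto' hσtendsto fun k => le_ciSup (hσbdd x) k
    have h3 := huf_ge x
    have h4 := hwf_le x
    constructor <;> linarith
  -- the set of bad points is P-null
  set bad : Set ↥(Sset (m+1) M) :=
    {x | ¬ DifferentiableAt ℝ G (projS m (Pp x))} with hbaddef
  have hbadnull : P bad = 0 := by
    have hN : volume {y : Fin m → ℝ | y ∈ U ∧ ¬ DifferentiableAt ℝ G y} = 0 :=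
      concave_ae_diff hUopen hGconc
    have hH := hausdorff_null_image m hN
    have hexp : ((Fintype.card (Fin m ⊕ Fin m) : ℕ) : ℝ) = 2 * ((m:ℝ) + 1) - 2 := by
      simp [Fintype.card_sum, Fintype.card_fin]
      ring
    rw [hexp] at hH
    have hsub2 : bad ⊆ Subtype.val ⁻¹'
        (Psi m '' {y | (y ∘ Sum.inl) ∈ {y : Fin m → ℝ | y ∈ U ∧ ¬ DifferentiableAt ℝ G y}}) := by
      intro x hx
      refine ⟨Sum.elim (projS m (Pp x)) (projS m (Qq x)), ?_, ?_⟩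
      · show (Sum.elim (projS m (Pp x)) (projS m (Qq x))) ∘ Sum.inl ∈
          {y : Fin m → ℝ | y ∈ U ∧ ¬ DifferentiableAt ℝ G y}
        rw [Sum.elim_comp_inl]
        exact ⟨hprojU _ (hPmem x), hx⟩
      · show (emb m ((Sum.elim (projS m (Pp x)) (projS m (Qq x))) ∘ Sum.inl),
          emb m ((Sum.elim (projS m (Pp x)) (projS m (Qq x))) ∘ Sum.inr)) = (x : _ × _)
        rw [Sum.elim_comp_inl, Sum.elim_comp_inr,
          emb_proj m _ (hPmem x).2, emb_proj m _ (hQmem x).2]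
    have h1 : P bad ≤ (P.map Subtype.val)
        (Psi m '' {y | (y ∘ Sum.inl) ∈ {y : Fin m → ℝ | y ∈ U ∧ ¬ DifferentiableAt ℝ G y}}) :=
      le_trans (measure_mono hsub2)
        (Measure.le_map_apply measurable_subtype_coe.aemeasurable _)
    have h2 : (P.map Subtype.val)
        (Psi m '' {y | (y ∘ Sum.inl) ∈ {y : Fin m → ℝ | y ∈ U ∧ ¬ DifferentiableAt ℝ G y}}) = 0 := by
      apply habs
      convert hH using 2
      push_cast
      ring
    exact le_antisymm (h1.trans_eq h2) (zero_le)
  -- a.e. equality of the envelopes with lS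
  have hfufw : ∀ x ∉ bad, Fu x = lS π x ∧ Fw x = lS π x := by
    intro x hx
    have hdiff : DifferentiableAt ℝ G (projS m (Pp x)) := not_not.1 hx
    obtain ⟨hu, hw⟩ := hcollapse x hdiff
    have hAux : Au x = Φ (Pp x) * vf x := by
      show max (min (Φ (Pp x) + uf x) (M * Φ (Pp x))) (Φ (Pp x) / M) = _
      rw [hu, hΦv x, min_eq_left (hΦvM x), max_eq_left (hΦvm x)]
    have hAwx : Aw x = Φ (Pp x) * vf x := by
      show min (max (Φ (Pp x) + wf x) (Φ (Pp x) / M)) (M * Φ (Pp x)) = _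
      rw [hw, hΦv x, max_eq_left (hΦvm x), min_eq_left (hΦvM x)]
    constructor
    · show Real.log (Au x) - Real.log (Φ (Pp x)) = lS π x
      rw [hAux, hlogsplit x, hlSvf x]
    · show Real.log (Aw x) - Real.log (Φ (Pp x)) = lS π x
      rw [hAwx, hlogsplit x, hlSvf x]
  have haeFu : lS π =ᵐ[P] Fu := by
    refine ae_iff.2 (measure_mono_null ?_ hbadnull)
    intro x hx
    by_contra hb
    exact hx (hfufw x hb).1.symm
  have haeFw : lS π =ᵐ[P] Fw := by
    refine ae_iff.2 (measure_mono_null ?_ hbadnull)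
    intro x hx
    by_contra hb
    exact hx (hfufw x hb).2.symm
  have hIu : ∫ x, lS π x ∂P = ∫ x, Fu x ∂P := integral_congr_ae haeFu
  have hIw : ∫ x, lS π x ∂P = ∫ x, Fw x ∂P := integral_congr_ae haeFw
  -- averaged sums
  set av : ℕ → ℝ := fun t => (∑ s ∈ Finset.range t, lS π (X s)) / t with havdef
  have hXweak : ∀ f : BoundedContinuousFunction ↥(Sset (m+1) M) ℝ,
      Tendsto (fun t : ℕ => (∑ s ∈ Finset.range t, f (X s)) / t) atTop
        (𝓝 (∫ x, f x ∂P)) := hweak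
  have hav_ub : ∀ t, av t ≤ Real.log M := by
    intro t
    rcases Nat.eq_zero_or_pos t with h | h
    · simp [havdef, h]; linarith
    · have ht : (0:ℝ) < t := by exact_mod_cast h
      show (∑ s ∈ Finset.range t, lS π (X s)) / t ≤ _
      rw [div_le_iff₀ ht]
      calc (∑ s ∈ Finset.range t, lS π (X s)) ≤ ∑ _s ∈ Finset.range t, Real.log M :=
            Finset.sum_le_sum fun s _ => hlS_ub (X s)
        _ = Real.log M * t := by rw [Finset.sum_const, Finset.card_range]; ring
  have hav_lb : ∀ t, -Real.log M ≤ av t := by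
    intro t
    rcases Nat.eq_zero_or_pos t with h | h
    · simp [havdef, h]; linarith
    · have ht : (0:ℝ) < t := by exact_mod_cast h
      show _ ≤ (∑ s ∈ Finset.range t, lS π (X s)) / t
      rw [le_div_iff₀ ht]
      calc -Real.log M * t = ∑ _s ∈ Finset.range t, (-Real.log M) := by
            rw [Finset.sum_const, Finset.card_range]; ring
        _ ≤ _ := Finset.sum_le_sum fun s _ => hlS_lb (X s)
  have hlimsup : limsup av atTop ≤ ∫ x, lS π x ∂P := by
    rw [hIu]
    have h1 := usc_limsup_le P X hXweak Fu husc_Fu (Real.log M) hFu_abs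
    refine le_trans (limsup_le_limsup (Eventually.of_forall ?_) ?_ ?_) h1
    · intro t
      show av t ≤ (∑ s ∈ Finset.range t, Fu (X s)) / t
      rcases Nat.eq_zero_or_pos t with h | h
      · simp [havdef, h]
      · have ht : (0:ℝ) < t := by exact_mod_cast h
        exact (div_le_div_iff_of_pos_right ht).2 (Finset.sum_le_sum fun s _ => hFu_ge (X s))
    · exact isCoboundedUnder_le_of_le atTop hav_lb
    · refine isBoundedUnder_of ⟨Real.log M, fun t => ?_⟩
      rcases Nat.eq_zero_or_pos t with h | h
      · simp [h]; linarith
      · have ht : (0:ℝ) < t := by exact_mod_cast h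
        rw [div_le_iff₀ ht]
        calc (∑ s ∈ Finset.range t, Fu (X s)) ≤ ∑ _s ∈ Finset.range t, Real.log M :=
              Finset.sum_le_sum fun s _ => (abs_le.1 (hFu_abs (X s))).2
          _ = Real.log M * t := by rw [Finset.sum_const, Finset.card_range]; ring
  have hliminf : ∫ x, lS π x ∂P ≤ liminf av atTop := by
    rw [hIw]
    have h1 := lsc_le_liminf P X hXweak Fw hlsc_Fw (Real.log M) hFw_abs
    refine le_trans h1 (liminf_le_liminf (Eventually.of_forall ?_) ?_ ?_)
    · intro t
      show (∑ s ∈ Finset.range t, Fw (X s)) / t ≤ av t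
      rcases Nat.eq_zero_or_pos t with h | h
      · simp [havdef, h]
      · have ht : (0:ℝ) < t := by exact_mod_cast h
        exact (div_le_div_iff_of_pos_right ht).2 (Finset.sum_le_sum fun s _ => hFw_le (X s))
    · refine isBoundedUnder_of ⟨-Real.log M, fun t => ?_⟩
      show -Real.log M ≤ (∑ s ∈ Finset.range t, Fw (X s)) / t
      rcases Nat.eq_zero_or_pos t with h | h
      · simp [h]; linarith
      · have ht : (0:ℝ) < t := by exact_mod_cast h
        rw [le_div_iff₀ ht]
        calc -Real.log M * t = ∑ _s ∈ Finset.range t, (-Real.log M) := by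
              rw [Finset.sum_const, Finset.card_range]; ring
          _ ≤ _ := Finset.sum_le_sum fun s _ => (abs_le.1 (hFw_abs (X s))).1
    · exact isCoboundedUnder_ge_of_le atTop hav_ub
  have htendsto : Tendsto av atTop (𝓝 (∫ x, lS π x ∂P)) :=
    tendsto_of_le_liminf_of_limsup_le hliminf hlimsup
      (isBoundedUnder_of ⟨Real.log M, hav_ub⟩)
      (isBoundedUnder_of ⟨-Real.log M, hav_lb⟩)
  constructor
  · have hstep : ∀ t, pV μ π (t+1) = pV μ π t * vf (X t) := fun t => rfl
    have hpVpos : ∀ t, 0 < pV μ π t := by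
      intro t
      induction t with
      | zero => show (0:ℝ) < 1; norm_num
      | succ t ih =>
        rw [hstep t]
        exact mul_pos ih (hvf_pos (X t))
    have hlog : ∀ t, Real.log (pV μ π t) = ∑ s ∈ Finset.range t, lS π (X s) := by
      intro t
      induction t with
      | zero => show Real.log 1 = _; simp
      | succ t ih =>
        rw [hstep t, Real.log_mul (hpVpos t).ne' (hvf_pos (X t)).ne', ih,
          Finset.sum_range_succ, hlSvf (X t)]
    have heq : (fun t : ℕ => Real.log (pV μ π t) / t) = av :=
      funext fun t => by rw [hlog t]
    rw [heq]
    exact htendsto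
  · have heq : (fun t : ℕ => ∫ x, lS π x ∂(empS μ hS t)) = av := by
      funext t
      show ∫ x, lS π x ∂((t : ℝ≥0∞)⁻¹ • ∑ s ∈ Finset.range t, Measure.dirac (X s)) = _
      exact integral_avg_dirac X (lS π) t
    rw [heq]
    exact htendsto
end
end
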